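/- arXiv:2308.14506 — 5 statements merged into one kernel-verified Lean document; each statement's English description precedes it below -/
import Mathlib

section
/- For every x = (x₀,x₁) ∈ D(𝒜) one has ⟨𝒜x, x⟩_X ≤ μ₀ |x|²_X. Consequently, for every μ ≥ μ₀ the operator 𝒜 − μI is dissipative, i.e. ⟨𝒜x − μx, x⟩_X ≤ 0 for all x ∈ D(𝒜). -/
open MeasureTheory Set RealInnerProductSpace

lemma integral_inner_primitive_eq_half_sq
    {E : Type*} [NormedAddCommGroup E] [InnerProductSpace ℝ E] [CompleteSpace E]
    {μ : Measure ℝ} [IsFiniteMeasure μ] [NullSingletonClass μ] {f : ℝ → E} (hf : Integrable f μ) :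
    ∫ t, ⟪f t, ∫ s in Iic t, f s ∂μ⟫ ∂μ = (1/2) * ‖∫ s, f s ∂μ‖^2 := by
  set c := ∫ s, f s ∂μ with hc
  set k : ℝ → ℝ → ℝ := fun t s => ({q : ℝ × ℝ | q.2 ≤ q.1}.indicator
      (fun q => (⟪f q.1, f q.2⟫ : ℝ)) (t, s)) with hk
  set k' : ℝ → ℝ → ℝ := fun t s => ({q : ℝ × ℝ | q.1 ≤ q.2}.indicator
      (fun q => (⟪f q.1, f q.2⟫ : ℝ)) (t, s)) with hk'
  have hmeas : AEStronglyMeasurable (fun p : ℝ × ℝ => (⟪f p.1, f p.2⟫ : ℝ)) (μ.prod μ) :=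
    (hf.1.comp_fst).inner (hf.1.comp_snd)
  have hdom : Integrable (fun p : ℝ × ℝ => ‖f p.1‖ * ‖f p.2‖) (μ.prod μ) :=
    hf.norm.mul_prod hf.norm
  have hKint : Integrable (Function.uncurry k) (μ.prod μ) := by
    refine hdom.mono' (hmeas.indicator (measurableSet_le measurable_snd measurable_fst)) ?_
    refine Filter.Eventually.of_forall fun p => ?_
    have hb : ‖(⟪f p.1, f p.2⟫ : ℝ)‖ ≤ ‖f p.1‖ * ‖f p.2‖ := norm_inner_le_norm _ _
    exact le_trans (norm_indicator_le_norm_self (fun q : ℝ × ℝ => (⟪f q.1, f q.2⟫ : ℝ)) p) hb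
  have hK'int : Integrable (Function.uncurry k') (μ.prod μ) := by
    refine hdom.mono' (hmeas.indicator (measurableSet_le measurable_fst measurable_snd)) ?_
    refine Filter.Eventually.of_forall fun p => ?_
    have hb : ‖(⟪f p.1, f p.2⟫ : ℝ)‖ ≤ ‖f p.1‖ * ‖f p.2‖ := norm_inner_le_norm _ _
    exact le_trans (norm_indicator_le_norm_self (fun q : ℝ × ℝ => (⟪f q.1, f q.2⟫ : ℝ)) p) hb
  have hIic : ∀ t : ℝ, ∫ s, k t s ∂μ = ⟪f t, ∫ s in Iic t, f s ∂μ⟫ := by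
    intro t
    have h1 : ∀ s, k t s = (Iic t).indicator (fun s => (⟪f t, f s⟫ : ℝ)) s := by
      intro s; by_cases h : s ≤ t <;> simp [hk, Set.indicator_apply, h, Set.mem_Iic]
    simp_rw [h1]
    rw [integral_indicator measurableSet_Iic, integral_inner hf.restrict]
  have hIci : ∀ t : ℝ, ∫ s, k' t s ∂μ = ⟪f t, ∫ s in Ici t, f s ∂μ⟫ := by
    intro t
    have h1 : ∀ s, k' t s = (Ici t).indicator (fun s => (⟪f t, f s⟫ : ℝ)) s := by
      intro s; by_cases h : t ≤ s <;> simp [hk', Set.indicator_apply, h, Set.mem_Ici]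
    simp_rw [h1]
    rw [integral_indicator measurableSet_Ici, integral_inner hf.restrict]
  have hsplit : ∀ t : ℝ, (∫ s in Iic t, f s ∂μ) + ∫ s in Ici t, f s ∂μ = c := by
    intro t
    have h1 : ∫ s in Ici t, f s ∂μ = ∫ s in Ioi t, f s ∂μ :=
      (setIntegral_congr_set (Ioi_ae_eq_Ici (a := t))).symm
    rw [h1, ← Set.compl_Iic]
    exact integral_add_compl measurableSet_Iic hf
  -- integrability of inner iterated integrals
  have hg1 : Integrable (fun t => ⟪f t, ∫ s in Iic t, f s ∂μ⟫) μ :=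
    (hKint.integral_prod_left).congr (Filter.Eventually.of_forall hIic)
  have hg2 : Integrable (fun t => ⟪f t, ∫ s in Ici t, f s ∂μ⟫) μ :=
    (hK'int.integral_prod_left).congr (Filter.Eventually.of_forall hIci)
  set J := ∫ t, ⟪f t, ∫ s in Iic t, f s ∂μ⟫ ∂μ with hJ
  have hswap : ∫ t, ⟪f t, ∫ s in Ici t, f s ∂μ⟫ ∂μ = J := by
    have h1 : ∫ t, ⟪f t, ∫ s in Ici t, f s ∂μ⟫ ∂μ = ∫ t, ∫ s, k' t s ∂μ ∂μ := by
      exact integral_congr_ae (Filter.Eventually.of_forall fun t => (hIci t).symm)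
    have h2 : ∫ t, ∫ s, k' t s ∂μ ∂μ = ∫ s, ∫ t, k' t s ∂μ ∂μ :=
      integral_integral_swap hK'int
    have h3 : ∀ s t : ℝ, k' t s = k s t := by
      intro s t
      by_cases h : t ≤ s <;> simp [hk, hk', Set.indicator_apply, h, real_inner_comm]
    rw [h1, h2]
    calc ∫ s, ∫ t, k' t s ∂μ ∂μ = ∫ s, ∫ t, k s t ∂μ ∂μ := by
          simp_rw [h3]
      _ = J := integral_congr_ae (Filter.Eventually.of_forall fun s => hIic s)
  have hsum : J + J = ‖c‖^2 := by
    have h1 : J + ∫ t, ⟪f t, ∫ s in Ici t, f s ∂μ⟫ ∂μ = ∫ t, ⟪f t, c⟫ ∂μ := by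
      rw [← integral_add hg1 hg2]
      refine integral_congr_ae (Filter.Eventually.of_forall fun t => ?_)
      show (⟪f t, ∫ s in Iic t, f s ∂μ⟫ : ℝ) + ⟪f t, ∫ s in Ici t, f s ∂μ⟫ = ⟪f t, c⟫
      rw [← inner_add_right, hsplit t]
    have h2 : ∫ t, ⟪f t, c⟫ ∂μ = ‖c‖^2 := by
      have he : ∀ t, (⟪f t, c⟫ : ℝ) = ⟪c, f t⟫ := fun t => real_inner_comm _ _
      simp_rw [he]
      rw [integral_inner hf, ← hc, real_inner_self_eq_norm_sq]
    rw [hswap] at h1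
    rw [h1, h2]
  linarith

set_option maxHeartbeats 1000000 in
noncomputable section

set_option maxHeartbeats 2000000 in
set_option synthInstance.maxHeartbeats 1000000 in
/-- For every x = (x₀,x₁) ∈ D(𝒜) one has ⟨𝒜x, x⟩_X ≤ μ₀ |x|²_X,
where 𝒜x = (a₀x₀ + x₁(0), ξ ↦ a₁(ξ)x₀ − x₁'(ξ)) and
μ₀ = max{|a₀| + 1, (1/2)‖a₁‖²_{L²}}.  Consequently, for every μ ≥ μ₀ the operator
𝒜 − μI is dissipative: ⟨𝒜x − μx, x⟩_X ≤ 0 for all x ∈ D(𝒜). -/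
theorem dissipativity_of_delay_operator
    (n : ℕ) (hn : 1 ≤ n) (d : ℝ) (hd : 0 < d)
    (a₀ : EuclideanSpace ℝ (Fin n) →L[ℝ] EuclideanSpace ℝ (Fin n))
    (a₁ : ℝ → EuclideanSpace ℝ (Fin n) →L[ℝ] EuclideanSpace ℝ (Fin n))
    (ha₁ : MemLp a₁ 2 (volume.restrict (Set.Icc (-d) 0)))
    (μ₀ : ℝ)
    (hμ₀ : μ₀ = max (‖a₀‖ + 1) ((1/2) * ∫ ξ in Set.Icc (-d) 0, ‖a₁ ξ‖^2))
    -- x = (x₀, x₁) ∈ D(𝒜): x₁(ξ) = ∫_{-d}^{ξ} g, with g ∈ L² (so x₁(-d) = 0 and x₁' = g a.e.)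
    (x₀ : EuclideanSpace ℝ (Fin n)) (x₁ g : ℝ → EuclideanSpace ℝ (Fin n))
    (hg : MemLp g 2 (volume.restrict (Set.Icc (-d) 0)))
    (hx₁ : ∀ ξ ∈ Set.Icc (-d) 0, x₁ ξ = ∫ ζ in (-d)..ξ, g ζ) :
    (⟪a₀ x₀ + x₁ 0, x₀⟫ + ∫ ξ in Set.Icc (-d) 0, ⟪a₁ ξ x₀ - g ξ, x₁ ξ⟫
        ≤ μ₀ * (‖x₀‖^2 + ∫ ξ in Set.Icc (-d) 0, ‖x₁ ξ‖^2))
    ∧ ∀ μ ≥ μ₀,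
      ⟪a₀ x₀ + x₁ 0 - μ • x₀, x₀⟫
        + ∫ ξ in Set.Icc (-d) 0, ⟪a₁ ξ x₀ - g ξ - μ • x₁ ξ, x₁ ξ⟫ ≤ 0 := by
  have hdS : (-d : ℝ) ≤ 0 := by linarith
  set S : Set ℝ := Set.Icc (-d) 0 with hS
  set μm : Measure ℝ := volume.restrict S with hμm
  haveI : IsFiniteMeasure μm := ⟨by rw [hμm, Measure.restrict_apply_univ]; exact measure_Icc_lt_top⟩
  have h0S : (0:ℝ) ∈ S := by simp [hS, hdS]
  have hgi : Integrable g μm := hg.integrable one_le_two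
  have hgIOn : IntegrableOn g S := hgi
  -- the primitive F and continuity
  set F : ℝ → EuclideanSpace ℝ (Fin n) := fun t => ∫ ζ in (-d)..t, g ζ with hF
  have hFcont : ContinuousOn F S := by
    have := intervalIntegral.continuousOn_primitive_interval
      (a := -d) (b := 0) (μ := volume) (f := g) (by rwa [Set.uIcc_of_le hdS])
    rwa [Set.uIcc_of_le hdS] at this
  obtain ⟨C, hC⟩ := isCompact_Icc.exists_bound_of_continuousOn hFcont
  have hx₁F : ∀ ξ ∈ S, x₁ ξ = F ξ := fun ξ hξ => hx₁ ξ hξ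
  have hx₁ae : x₁ =ᵐ[μm] F :=
    (ae_restrict_iff' measurableSet_Icc).mpr (Filter.Eventually.of_forall hx₁F)
  have hx₁bd : ∀ᵐ ξ ∂μm, ‖x₁ ξ‖ ≤ C :=
    (ae_restrict_iff' measurableSet_Icc).mpr
      (Filter.Eventually.of_forall fun ξ hξ => by rw [hx₁F ξ hξ]; exact hC ξ hξ)
  have hFmem : MemLp F 2 μm :=
    MemLp.of_bound (hFcont.aestronglyMeasurable measurableSet_Icc) C
      ((ae_restrict_iff' measurableSet_Icc).mpr (Filter.Eventually.of_forall hC))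
  have hx₁mem : MemLp x₁ 2 μm := hFmem.ae_eq hx₁ae.symm
  -- L² elements
  set U := (ha₁.norm).toLp _ with hU
  set W := (hx₁mem.norm).toLp _ with hW
  have hUc : ∀ᵐ ξ ∂μm, U ξ = ‖a₁ ξ‖ := (ha₁.norm).coeFn_toLp
  have hWc : ∀ᵐ ξ ∂μm, W ξ = ‖x₁ ξ‖ := (hx₁mem.norm).coeFn_toLp
  have hUsq : ∫ ξ in S, ‖a₁ ξ‖^2 = ‖U‖^2 := by
    rw [← real_inner_self_eq_norm_sq, L2.inner_def]
    refine (integral_congr_ae (hUc.mono fun ξ h => ?_)).symm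
    rw [RCLike.inner_apply]; simp [h]; ring
  have hWsq : ∫ ξ in S, ‖x₁ ξ‖^2 = ‖W‖^2 := by
    rw [← real_inner_self_eq_norm_sq, L2.inner_def]
    refine (integral_congr_ae (hWc.mono fun ξ h => ?_)).symm
    rw [RCLike.inner_apply]; simp [h]; ring
  have hUWi : Integrable (fun ξ => ‖a₁ ξ‖ * ‖x₁ ξ‖) μm := by
    refine (L2.integrable_inner (𝕜 := ℝ) U W).congr ?_
    filter_upwards [hUc, hWc] with ξ h1 h2
    rw [RCLike.inner_apply]; simp [h1, h2, mul_comm]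
  have hUWint : ∫ ξ in S, ‖a₁ ξ‖ * ‖x₁ ξ‖ ≤ ‖U‖ * ‖W‖ := by
    have h1 : ∫ ξ in S, ‖a₁ ξ‖ * ‖x₁ ξ‖ = (⟪U, W⟫ : ℝ) := by
      rw [L2.inner_def]
      refine integral_congr_ae ?_
      filter_upwards [hUc, hWc] with ξ h1 h2
      rw [RCLike.inner_apply]; simp [h1, h2, mul_comm]
    rw [h1]; exact real_inner_le_norm U W
  -- measurability of a₁ • x₀
  have hAx : AEStronglyMeasurable (fun ξ => a₁ ξ x₀) μm :=
    (ContinuousLinearMap.apply ℝ (EuclideanSpace ℝ (Fin n)) x₀).continuous.comp_aestronglyMeasurable ha₁.1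
  -- integrability of the three integrands
  have h1 : Integrable (fun ξ => (⟪a₁ ξ x₀, x₁ ξ⟫ : ℝ)) μm := by
    refine Integrable.mono' (((ha₁.integrable one_le_two).norm.mul_const (‖x₀‖ * C)))
      (hAx.inner hx₁mem.1) ?_
    filter_upwards [hx₁bd] with ξ hξ
    calc ‖(⟪a₁ ξ x₀, x₁ ξ⟫ : ℝ)‖ ≤ ‖a₁ ξ x₀‖ * ‖x₁ ξ‖ := norm_inner_le_norm _ _
      _ ≤ (‖a₁ ξ‖ * ‖x₀‖) * C := by
          have h := (a₁ ξ).le_opNorm x₀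
          have h0 : (0:ℝ) ≤ ‖a₁ ξ x₀‖ := norm_nonneg _
          have h2 : (0:ℝ) ≤ ‖x₁ ξ‖ := norm_nonneg _
          nlinarith
      _ = ‖a₁ ξ‖ * (‖x₀‖ * C) := by ring
  have h2 : Integrable (fun ξ => (⟪g ξ, x₁ ξ⟫ : ℝ)) μm := by
    refine Integrable.mono' ((hgi.norm.mul_const C)) (hg.1.inner hx₁mem.1) ?_
    filter_upwards [hx₁bd] with ξ hξ
    calc ‖(⟪g ξ, x₁ ξ⟫ : ℝ)‖ ≤ ‖g ξ‖ * ‖x₁ ξ‖ := norm_inner_le_norm _ _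
      _ ≤ ‖g ξ‖ * C := by
          have h2 : (0:ℝ) ≤ ‖g ξ‖ := norm_nonneg _
          nlinarith [norm_nonneg (x₁ ξ)]
  have h3 : Integrable (fun ξ => ‖x₁ ξ‖^2) μm := by
    refine Integrable.mono' (integrable_const (C^2))
      ((hx₁mem.1.norm.aemeasurable.pow_const 2).aestronglyMeasurable) ?_
    filter_upwards [hx₁bd] with ξ hξ
    have h0 : (0:ℝ) ≤ ‖x₁ ξ‖ := norm_nonneg _
    rw [Real.norm_eq_abs, abs_of_nonneg (by positivity)]
    nlinarith
  -- the half-square identity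
  have hprim : ∀ ξ ∈ S, (∫ s in Set.Iic ξ, g s ∂μm) = F ξ := by
    intro ξ hξ
    rw [hμm, Measure.restrict_restrict measurableSet_Iic]
    have hset : Set.Iic ξ ∩ S = Set.Icc (-d) ξ := by
      ext z
      simp only [Set.mem_inter_iff, Set.mem_Iic, hS, Set.mem_Icc]
      constructor
      · rintro ⟨h1, h2, h3⟩; exact ⟨h2, h1⟩
      · rintro ⟨h1, h2⟩; exact ⟨h2, h1, le_trans h2 hξ.2⟩
    rw [hset, integral_Icc_eq_integral_Ioc]
    exact (intervalIntegral.integral_of_le hξ.1).symm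
  have hx₁0 : x₁ 0 = ∫ s, g s ∂μm := by
    have hr : ∫ s in Set.Iic 0, g s ∂μm = ∫ s, g s ∂μm := by
      have hss : Set.Iic 0 ∩ S = S := Set.inter_eq_right.mpr (fun z (hz : z ∈ S) => hz.2)
      rw [hμm, Measure.restrict_restrict measurableSet_Iic, hss]
    rw [hx₁ 0 h0S, ← hr]
    exact (hprim 0 h0S).symm
  have hJ : ∫ ξ in S, (⟪g ξ, x₁ ξ⟫ : ℝ) = (1/2) * ‖x₁ 0‖^2 := by
    have key := integral_inner_primitive_eq_half_sq (μ := μm) hgi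
    have heq : ∫ ξ in S, (⟪g ξ, x₁ ξ⟫ : ℝ) = ∫ t, ⟪g t, ∫ s in Set.Iic t, g s ∂μm⟫ ∂μm := by
      refine integral_congr_ae ?_
      filter_upwards [hx₁ae, (ae_restrict_iff' measurableSet_Icc).mpr
        (Filter.Eventually.of_forall (fun ξ (hξ : ξ ∈ S) => hprim ξ hξ))] with ξ ha hb
      rw [hb, ha]
    rw [heq, key, ← hx₁0]
  -- split the main integral
  set T := ∫ ξ in S, (⟪a₁ ξ x₀, x₁ ξ⟫ : ℝ) with hT
  have hsplitInt : ∫ ξ in S, (⟪a₁ ξ x₀ - g ξ, x₁ ξ⟫ : ℝ) = T - (1/2) * ‖x₁ 0‖^2 := by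
    have hpt : ∀ ξ, (⟪a₁ ξ x₀ - g ξ, x₁ ξ⟫ : ℝ) = ⟪a₁ ξ x₀, x₁ ξ⟫ - ⟪g ξ, x₁ ξ⟫ :=
      fun ξ => inner_sub_left _ _ _
    rw [integral_congr_ae (Filter.Eventually.of_forall hpt), integral_sub h1 h2, hJ]
  have hTb : T ≤ ‖x₀‖ * (‖U‖ * ‖W‖) := by
    have hp : ∀ ξ, (⟪a₁ ξ x₀, x₁ ξ⟫ : ℝ) ≤ (‖a₁ ξ‖ * ‖x₁ ξ‖) * ‖x₀‖ := by
      intro ξ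
      calc (⟪a₁ ξ x₀, x₁ ξ⟫ : ℝ) ≤ ‖a₁ ξ x₀‖ * ‖x₁ ξ‖ := real_inner_le_norm _ _
        _ ≤ (‖a₁ ξ‖ * ‖x₁ ξ‖) * ‖x₀‖ := by
            nlinarith [(a₁ ξ).le_opNorm x₀, norm_nonneg (x₁ ξ), norm_nonneg (a₁ ξ x₀),
              norm_nonneg x₀, norm_nonneg (a₁ ξ)]
    calc T ≤ ∫ ξ in S, (‖a₁ ξ‖ * ‖x₁ ξ‖) * ‖x₀‖ ∂volume := by
          exact integral_mono h1 (hUWi.mul_const _) hp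
      _ = (∫ ξ in S, ‖a₁ ξ‖ * ‖x₁ ξ‖) * ‖x₀‖ := by rw [integral_mul_const]
      _ ≤ (‖U‖ * ‖W‖) * ‖x₀‖ := mul_le_mul_of_nonneg_right hUWint (norm_nonneg x₀)
      _ = ‖x₀‖ * (‖U‖ * ‖W‖) := by ring
  have hμ1 : ‖a₀‖ + 1 ≤ μ₀ := by rw [hμ₀]; exact le_max_left _ _
  have hμ2 : (1/2) * ‖U‖^2 ≤ μ₀ := by rw [hμ₀, ← hUsq]; exact le_max_right _ _
  have ha₀b : (⟪a₀ x₀ + x₁ 0, x₀⟫ : ℝ) ≤ ‖a₀‖ * ‖x₀‖^2 + ‖x₁ 0‖ * ‖x₀‖ := by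
    rw [inner_add_left]
    nlinarith [real_inner_le_norm (a₀ x₀) x₀, real_inner_le_norm (x₁ 0) x₀,
      a₀.le_opNorm x₀, norm_nonneg x₀]
  have part1 : (⟪a₀ x₀ + x₁ 0, x₀⟫ : ℝ) + ∫ ξ in S, (⟪a₁ ξ x₀ - g ξ, x₁ ξ⟫ : ℝ)
      ≤ μ₀ * (‖x₀‖^2 + ∫ ξ in S, ‖x₁ ξ‖^2) := by
    rw [hsplitInt, hWsq]
    nlinarith [sq_nonneg (‖x₁ 0‖ - ‖x₀‖), sq_nonneg (‖x₀‖ - ‖U‖ * ‖W‖),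
      mul_nonneg (sub_nonneg.mpr hμ2) (sq_nonneg ‖W‖),
      mul_nonneg (sub_nonneg.mpr hμ1) (sq_nonneg ‖x₀‖), hTb, ha₀b]
  refine ⟨part1, fun μ hμ => ?_⟩
  have e1 : (⟪a₀ x₀ + x₁ 0 - μ • x₀, x₀⟫ : ℝ) = ⟪a₀ x₀ + x₁ 0, x₀⟫ - μ * ‖x₀‖^2 := by
    rw [inner_sub_left, real_inner_smul_left, real_inner_self_eq_norm_sq]
  have hsub : Integrable (fun ξ => (⟪a₁ ξ x₀ - g ξ, x₁ ξ⟫ : ℝ)) μm := by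
    refine (h1.sub h2).congr (Filter.Eventually.of_forall fun ξ => ?_)
    exact (inner_sub_left _ _ _).symm
  have e2 : ∫ ξ in S, (⟪a₁ ξ x₀ - g ξ - μ • x₁ ξ, x₁ ξ⟫ : ℝ)
      = (∫ ξ in S, (⟪a₁ ξ x₀ - g ξ, x₁ ξ⟫ : ℝ)) - μ * ∫ ξ in S, ‖x₁ ξ‖^2 := by
    have hpt : ∀ ξ, (⟪a₁ ξ x₀ - g ξ - μ • x₁ ξ, x₁ ξ⟫ : ℝ)
        = ⟪a₁ ξ x₀ - g ξ, x₁ ξ⟫ - μ * ‖x₁ ξ‖^2 := by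
      intro ξ; rw [inner_sub_left, real_inner_smul_left, real_inner_self_eq_norm_sq]
    rw [integral_congr_ae (Filter.Eventually.of_forall hpt),
      integral_sub hsub (h3.const_mul μ), integral_const_mul]
  have hv : 0 ≤ ∫ ξ in S, ‖x₁ ξ‖^2 := integral_nonneg fun ξ => sq_nonneg _
  rw [e1, e2]
  nlinarith [part1, mul_nonneg (sub_nonneg.mpr hμ) (add_nonneg (sq_nonneg ‖x₀‖) hv)]
end
end

section
/- Let μ ≥ μ₀ and λ > 0. Then for every y = (y₀,y₁) ∈ X there exists a unique x ∈ D(𝒜) such that λx − (𝒜x − μx) = y, and it is given explicitly by x₀ = [(λ+μ)I_n − a₀ − ∫_{-d}^0 e^{(λ+μ)r} a₁(r) dr]^{−1}( y₀ + ∫_{-d}^0 e^{(λ+μ)r} y₁(r) dr ) and x₁(ξ) = ∫_{-d}^{ξ} e^{−(λ+μ)(ξ−r)}( y₁(r) + a₁(r)x₀ ) dr. In particular λI − (𝒜 − μI) : D(𝒜) → X is a bijection, so that together with dissipativity the operator 𝒜 − μI is maximal dissipative for every μ ≥ μ₀. -/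
open MeasureTheory RealInnerProductSpace
noncomputable section

open Set intervalIntegral

variable {E : Type*} [NormedAddCommGroup E] [NormedSpace ℝ E] [CompleteSpace E]

lemma volterra_zero (β a b : ℝ) (hab : a ≤ b) (p : ℝ → E)
    (hp : ContinuousOn p (Set.Icc a b))
    (heq : ∀ ξ ∈ Set.Icc a b, p ξ = (-β) • ∫ s in a..ξ, p s) :
    ∀ ξ ∈ Set.Icc a b, p ξ = 0 := by
  obtain ⟨C, hC⟩ := isCompact_Icc.exists_bound_of_continuousOn hp
  have hpint : ∀ ξ ∈ Set.Icc a b, IntervalIntegrable p volume a ξ := by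
    intro ξ hξ
    apply ContinuousOn.intervalIntegrable
    apply hp.mono
    rw [Set.uIcc_of_le hξ.1]
    exact Set.Icc_subset_Icc le_rfl hξ.2
  have hnint : ∀ ξ ∈ Set.Icc a b, IntervalIntegrable (fun s => ‖p s‖) volume a ξ :=
    fun ξ hξ => (hpint ξ hξ).norm
  have key : ∀ m : ℕ, ∀ ξ ∈ Set.Icc a b,
      ‖p ξ‖ ≤ C * (|β| * (ξ - a)) ^ m / m.factorial := by
    intro m
    induction m with
    | zero => intro ξ hξ; simpa using hC ξ hξ
    | succ m ih =>
      intro ξ hξ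
      have hbound : ∀ s ∈ Set.Icc a ξ, ‖p s‖ ≤ (C * |β| ^ m / m.factorial) * (s - a) ^ m := by
        intro s hs
        have hs' : s ∈ Set.Icc a b := ⟨hs.1, hs.2.trans hξ.2⟩
        calc ‖p s‖ ≤ C * (|β| * (s - a)) ^ m / m.factorial := ih s hs'
          _ = (C * |β| ^ m / m.factorial) * (s - a) ^ m := by rw [mul_pow]; ring
      have h1 : ‖p ξ‖ ≤ |β| * ∫ s in a..ξ, ‖p s‖ := by
        rw [heq ξ hξ, norm_smul, norm_neg, Real.norm_eq_abs]
        gcongr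
        exact intervalIntegral.norm_integral_le_integral_norm hξ.1
      have h2 : (∫ s in a..ξ, ‖p s‖) ≤
          ∫ s in a..ξ, (C * |β| ^ m / m.factorial) * (s - a) ^ m := by
        apply intervalIntegral.integral_mono_on hξ.1 (hnint ξ hξ) _ hbound
        exact (Continuous.intervalIntegrable (by continuity) _ _)
      have h3 : (∫ s in a..ξ, (C * |β| ^ m / m.factorial) * (s - a) ^ m)
          = (C * |β| ^ m / m.factorial) * ((ξ - a) ^ (m + 1) / (m + 1)) := by
        rw [intervalIntegral.integral_const_mul]
        congr 1
        rw [intervalIntegral.integral_comp_sub_right (fun x => x ^ m) a]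
        simp [integral_pow]
      have hβ0 : (0:ℝ) ≤ |β| := abs_nonneg β
      have hfac : (Nat.factorial (m+1) : ℝ) = (m+1) * m.factorial := by
        push_cast [Nat.factorial_succ]; ring
      calc ‖p ξ‖ ≤ |β| * ∫ s in a..ξ, ‖p s‖ := h1
        _ ≤ |β| * ((C * |β| ^ m / m.factorial) * ((ξ - a) ^ (m + 1) / (m + 1))) := by
            rw [← h3]; gcongr
        _ = C * (|β| * (ξ - a)) ^ (m + 1) / (Nat.factorial (m + 1)) := by
            rw [hfac, mul_pow]
            field_simp
            ring
  intro ξ hξ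
  have hlim : Filter.Tendsto (fun m : ℕ => C * (|β| * (ξ - a)) ^ m / m.factorial)
      Filter.atTop (nhds 0) := by
    have := FloorSemiring.tendsto_pow_div_factorial_atTop (K := ℝ) (|β| * (ξ - a))
    simpa [mul_div_assoc] using this.const_mul C
  have : ‖p ξ‖ ≤ 0 := ge_of_tendsto' hlim (fun m => key m ξ hξ)
  simpa using le_antisymm this (norm_nonneg _)

lemma exp_smul_integrableOn (c a b : ℝ) {f : ℝ → E} (hf : IntegrableOn f (Set.Ioc a b)) :
    IntegrableOn (fun s => Real.exp (c * s) • f s) (Set.Ioc a b) := by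
  apply MeasureTheory.Integrable.smul_of_top_right hf
  apply memLp_top_of_bound ((Real.continuous_exp.comp (continuous_const.mul continuous_id)).aestronglyMeasurable)
    (Real.exp (|c| * (|a| + |b|)))
  filter_upwards [ae_restrict_mem measurableSet_Ioc] with s hs
  simp only [Function.comp, Real.norm_eq_abs, Real.abs_exp, Real.exp_le_exp]
  have h1 : |s| ≤ |a| + |b| := by
    rw [abs_le]
    constructor
    · have := neg_abs_le a; have := abs_nonneg b; have := hs.1; linarith
    · have := le_abs_self b; have := abs_nonneg a; have := hs.2; linarith
  calc c * s ≤ |c * s| := le_abs_self _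
    _ = |c| * |s| := abs_mul c s
    _ ≤ |c| * (|a| + |b|) := by gcongr

lemma volterra_aux (β a ξ : ℝ) (hβ : β ≠ 0) (haξ : a ≤ ξ) (φ : ℝ → E)
    (hφ : Integrable φ volume) :
    β • ∫ r in a..ξ, Real.exp (-(β * r)) • ∫ s in a..r, φ s
      = (∫ s in a..ξ, Real.exp (-(β * s)) • φ s)
        - Real.exp (-(β * ξ)) • ∫ s in a..ξ, φ s := by
  set ν := volume.restrict (Set.Ioc a ξ) with hν
  have hexpc : Continuous fun r : ℝ => Real.exp (-(β * r)) :=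
    Real.continuous_exp.comp (continuous_const.mul continuous_id).neg
  have hbase : Integrable (fun z : ℝ × ℝ => Real.exp (-(β * z.1)) • φ z.2) (ν.prod ν) :=
    Integrable.smul_prod hexpc.integrableOn_Ioc hφ.restrict
  have hset : MeasurableSet {z : ℝ × ℝ | z.2 ≤ z.1} :=
    measurableSet_le measurable_snd measurable_fst
  have huncurry : (Function.uncurry fun r s => if s ≤ r then Real.exp (-(β * r)) • φ s else 0)
      = {z : ℝ × ℝ | z.2 ≤ z.1}.indicator (fun z => Real.exp (-(β * z.1)) • φ z.2) := by
    funext z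
    simp [Function.uncurry, Set.indicator_apply]
  have hint : Integrable
      (Function.uncurry fun r s => if s ≤ r then Real.exp (-(β * r)) • φ s else 0) (ν.prod ν) := by
    rw [huncurry]; exact hbase.indicator hset
  have hswap := MeasureTheory.integral_integral_swap hint
  have hL : (∫ r, (∫ s, (if s ≤ r then Real.exp (-(β * r)) • φ s else 0) ∂ν) ∂ν)
      = ∫ r, (Real.exp (-(β * r)) • ∫ s in a..r, φ s) ∂ν := by
    apply MeasureTheory.integral_congr_ae
    filter_upwards [ae_restrict_mem measurableSet_Ioc] with r hr
    have heqf : (fun s => if s ≤ r then Real.exp (-(β * r)) • φ s else 0)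
        = (Set.Iic r).indicator (fun s => Real.exp (-(β * r)) • φ s) := by
      funext s; simp [Set.indicator_apply]
    rw [heqf, hν, MeasureTheory.integral_indicator measurableSet_Iic,
      Measure.restrict_restrict measurableSet_Iic]
    have hseteq : Set.Iic r ∩ Set.Ioc a ξ = Set.Ioc a r := by
      ext x
      simp only [Set.mem_inter_iff, Set.mem_Iic, Set.mem_Ioc]
      constructor
      · rintro ⟨h1, h2, _⟩; exact ⟨h2, h1⟩
      · rintro ⟨h1, h2⟩; exact ⟨h2, h1, h2.trans hr.2⟩
    rw [hseteq, MeasureTheory.integral_smul, intervalIntegral.integral_of_le hr.1.le]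
  have hR : (∫ s, (∫ r, (if s ≤ r then Real.exp (-(β * r)) • φ s else 0) ∂ν) ∂ν)
      = ∫ s, ((β⁻¹ * (Real.exp (-(β * s)) - Real.exp (-(β * ξ)))) • φ s) ∂ν := by
    apply MeasureTheory.integral_congr_ae
    filter_upwards [ae_restrict_mem measurableSet_Ioc] with s hs
    have heqf : (fun r => if s ≤ r then Real.exp (-(β * r)) • φ s else 0)
        = (Set.Ici s).indicator (fun r => Real.exp (-(β * r)) • φ s) := by
      funext r; simp [Set.indicator_apply]
    rw [heqf, hν, MeasureTheory.integral_indicator measurableSet_Ici,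
      Measure.restrict_restrict measurableSet_Ici]
    have hseteq : Set.Ici s ∩ Set.Ioc a ξ = Set.Icc s ξ := by
      ext x
      simp only [Set.mem_inter_iff, Set.mem_Ici, Set.mem_Ioc, Set.mem_Icc]
      constructor
      · rintro ⟨h1, _, h3⟩; exact ⟨h1, h3⟩
      · rintro ⟨h1, h2⟩; exact ⟨h1, hs.1.trans_le h1, h2⟩
    rw [hseteq, _root_.integral_smul_const]
    congr 1
    rw [MeasureTheory.integral_Icc_eq_integral_Ioc, ← intervalIntegral.integral_of_le hs.2]
    have h1 : ∀ x : ℝ, Real.exp (-(β * x)) = Real.exp (-β * x) := fun x => by ring_nf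
    simp_rw [h1]
    rw [intervalIntegral.integral_comp_mul_left Real.exp (neg_ne_zero.2 hβ),
      integral_exp, smul_eq_mul, inv_neg, neg_mul, ← mul_neg, neg_sub]
  have hmain : (∫ r, (Real.exp (-(β * r)) • ∫ s in a..r, φ s) ∂ν)
      = ∫ s, ((β⁻¹ * (Real.exp (-(β * s)) - Real.exp (-(β * ξ)))) • φ s) ∂ν := by
    rw [← hL, ← hR]; exact hswap
  rw [intervalIntegral.integral_of_le haξ, ← hν, hmain, ← MeasureTheory.integral_smul]
  have h2 : (fun s => β • (β⁻¹ * (Real.exp (-(β * s)) - Real.exp (-(β * ξ)))) • φ s)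
      = fun s => (Real.exp (-(β * s)) - Real.exp (-(β * ξ))) • φ s := by
    funext s
    rw [smul_smul]
    congr 1
    field_simp
  rw [h2]
  have h3 : (fun s => (Real.exp (-(β * s)) - Real.exp (-(β * ξ))) • φ s)
      = fun s => Real.exp (-(β * s)) • φ s - Real.exp (-(β * ξ)) • φ s := by
    funext s; rw [sub_smul]
  have hint1 : Integrable (fun s => Real.exp (-(β * s)) • φ s) ν := by
    exact (by simpa [neg_mul] using exp_smul_integrableOn (-β) a ξ hφ.integrableOn :
      IntegrableOn (fun s => Real.exp (-(β * s)) • φ s) (Set.Ioc a ξ) volume)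
  have hint2 : Integrable (fun s => Real.exp (-(β * ξ)) • φ s) ν := hφ.restrict.smul _
  rw [h3, MeasureTheory.integral_sub hint1 hint2, MeasureTheory.integral_smul]
  simp only [intervalIntegral.integral_of_le haξ]
  rfl

lemma exp_smul_integrableOn_Icc (c a b : ℝ) {f : ℝ → E} (hf : IntegrableOn f (Set.Icc a b)) :
    IntegrableOn (fun s => Real.exp (c * s) • f s) (Set.Icc a b) := by
  apply MeasureTheory.Integrable.smul_of_top_right hf
  apply memLp_top_of_bound
    ((Real.continuous_exp.comp (continuous_const.mul continuous_id)).aestronglyMeasurable)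
    (Real.exp (|c| * (|a| + |b|)))
  filter_upwards [ae_restrict_mem measurableSet_Icc] with s hs
  simp only [Function.comp, Real.norm_eq_abs, Real.abs_exp, Real.exp_le_exp]
  have h1 : |s| ≤ |a| + |b| := by
    rw [abs_le]
    constructor
    · have := neg_abs_le a; have := abs_nonneg b; have := hs.1; linarith
    · have := le_abs_self b; have := abs_nonneg a; have := hs.2; linarith
  calc c * s ≤ |c * s| := le_abs_self _
    _ = |c| * |s| := abs_mul c s
    _ ≤ |c| * (|a| + |b|) := by gcongr

lemma volterra_package (β a b : ℝ) (hβ : β ≠ 0) (hab : a ≤ b) (h : ℝ → E)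
    (hh : IntegrableOn h (Set.Icc a b)) :
    ∃ W : ℝ → E, Continuous W
      ∧ (∀ ξ ∈ Set.Icc a b, W ξ = ∫ s in a..ξ, Real.exp (-(β * (ξ - s))) • h s)
      ∧ (∀ u : ℝ → E, ContinuousOn u (Set.Icc a b) →
          (∀ ξ ∈ Set.Icc a b, u ξ = (∫ s in a..ξ, h s) - β • ∫ r in a..ξ, u r) →
          ∀ ξ ∈ Set.Icc a b, u ξ = W ξ)
      ∧ (∀ ξ ∈ Set.Icc a b, W ξ = (∫ s in a..ξ, h s) - β • ∫ r in a..ξ, W r) := by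
  set φ : ℝ → E := (Set.Icc a b).indicator (fun s => Real.exp (β * s) • h s) with hφdef
  have hφint : Integrable φ volume :=
    (integrable_indicator_iff measurableSet_Icc).2 (exp_smul_integrableOn_Icc β a b hh)
  set W : ℝ → E := fun ξ => Real.exp (-(β * ξ)) • ∫ s in a..ξ, φ s with hWdef
  have hWc : Continuous W := by
    rw [hWdef]
    exact (Real.continuous_exp.comp (continuous_const.mul continuous_id).neg).smul
      (hφint.continuous_primitive a)
  have hWform : ∀ ξ ∈ Set.Icc a b, W ξ = ∫ s in a..ξ, Real.exp (-(β * (ξ - s))) • h s := by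
    intro ξ hξ
    have hEq : Set.EqOn (fun s => Real.exp (-(β * (ξ - s))) • h s)
        (fun s => Real.exp (-(β * ξ)) • φ s) (Set.uIcc a ξ) := by
      intro s hs
      rw [Set.uIcc_of_le hξ.1] at hs
      have hs' : s ∈ Set.Icc a b := ⟨hs.1, hs.2.trans hξ.2⟩
      simp only [hφdef, Set.indicator_of_mem hs', smul_smul, ← Real.exp_add]
      congr 2
      ring
    rw [intervalIntegral.integral_congr hEq, intervalIntegral.integral_smul, hWdef]
  have hcollapse : ∀ ξ ∈ Set.Icc a b,
      (∫ s in a..ξ, Real.exp (-(β * s)) • φ s) = ∫ s in a..ξ, h s := by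
    intro ξ hξ
    apply intervalIntegral.integral_congr
    intro s hs
    rw [Set.uIcc_of_le hξ.1] at hs
    have hs' : s ∈ Set.Icc a b := ⟨hs.1, hs.2.trans hξ.2⟩
    simp only [hφdef, Set.indicator_of_mem hs', smul_smul, ← Real.exp_add, neg_add_cancel,
      Real.exp_zero, one_smul]
  have hWeq : ∀ ξ ∈ Set.Icc a b, W ξ = (∫ s in a..ξ, h s) - β • ∫ r in a..ξ, W r := by
    intro ξ hξ
    have hv := volterra_aux β a ξ hβ hξ.1 φ hφint
    rw [hcollapse ξ hξ] at hv
    have hv' : β • (∫ r in a..ξ, Real.exp (-(β * r)) • ∫ s in a..r, φ s) + W ξ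
        = ∫ s in a..ξ, h s := by
      rw [hv, hWdef]; abel
    rw [eq_sub_iff_add_eq, add_comm]
    rw [hWdef] at hv' ⊢
    exact hv'
  refine ⟨W, hWc, hWform, ?_, hWeq⟩
  intro u hu hueq
  have hWint : ∀ ξ ∈ Set.Icc a b, IntervalIntegrable W volume a ξ :=
    fun ξ _ => hWc.intervalIntegrable a ξ
  have huint : ∀ ξ ∈ Set.Icc a b, IntervalIntegrable u volume a ξ := by
    intro ξ hξ
    apply ContinuousOn.intervalIntegrable
    apply hu.mono
    rw [Set.uIcc_of_le hξ.1]
    exact Set.Icc_subset_Icc le_rfl hξ.2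
  have hzero := volterra_zero β a b hab (fun t => u t - W t)
    (hu.sub hWc.continuousOn) ?_
  · intro ξ hξ
    have := hzero ξ hξ
    have h2 : u ξ - W ξ = 0 := this
    exact sub_eq_zero.mp h2
  · intro ξ hξ
    show u ξ - W ξ = -β • ∫ s in a..ξ, (u s - W s)
    have h1 : u ξ - W ξ = -β • (∫ r in a..ξ, u r) + β • ∫ r in a..ξ, W r := by
      rw [hueq ξ hξ, hWeq ξ hξ, neg_smul]
      abel
    rw [h1, intervalIntegral.integral_sub (huint ξ hξ) (hWint ξ hξ), smul_sub]
    rw [neg_smul, neg_smul]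
    abel
lemma clm_smul_mul {n : ℕ} (c : ℝ)
    (A B : EuclideanSpace ℝ (Fin n) →L[ℝ] EuclideanSpace ℝ (Fin n)) :
    (c • A) * B = c • (A * B) :=
  ContinuousLinearMap.smul_comp c A B

set_option maxHeartbeats 1600000 in
set_option synthInstance.maxHeartbeats 400000 in
/-- For μ ≥ μ₀ and λ > 0, for every y = (y₀,y₁) ∈ X there is a unique
x = (x₀,x₁) ∈ D(𝒜) (with a.e. derivative g of x₁) solving λx − (𝒜x − μx) = y, and it is
given by the explicit resolvent formulas.  In particular λI − (𝒜 − μI) : D(𝒜) → X is a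
bijection, so together with dissipativity 𝒜 − μI is maximal dissipative for μ ≥ μ₀. -/
theorem maximal_dissipativity_resolvent
    (n : ℕ) (hn : 1 ≤ n) (d : ℝ) (hd : 0 < d)
    (a₀ : EuclideanSpace ℝ (Fin n) →L[ℝ] EuclideanSpace ℝ (Fin n))
    (a₁ : ℝ → EuclideanSpace ℝ (Fin n) →L[ℝ] EuclideanSpace ℝ (Fin n))
    (ha₁ : MemLp a₁ 2 (volume.restrict (Set.Icc (-d) 0)))
    (μ₀ : ℝ)
    (hμ₀ : μ₀ = max (‖a₀‖ + 1) ((1/2) * ∫ ξ in Set.Icc (-d) 0, ‖a₁ ξ‖^2))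
    (μ : ℝ) (hμ : μ₀ ≤ μ) (lam : ℝ) (hlam : 0 < lam)
    (y₀ : EuclideanSpace ℝ (Fin n))
    (y₁ : ℝ → EuclideanSpace ℝ (Fin n))
    (hy₁ : MemLp y₁ 2 (volume.restrict (Set.Icc (-d) 0))) :
    ∃ (x₀ : EuclideanSpace ℝ (Fin n)) (x₁ g : ℝ → EuclideanSpace ℝ (Fin n)),
      -- x = (x₀,x₁) ∈ D(𝒜), with x₁' = g ∈ L², x₁(-d) = 0
      MemLp g 2 (volume.restrict (Set.Icc (-d) 0))
      ∧ (∀ ξ ∈ Set.Icc (-d) 0, x₁ ξ = ∫ ζ in (-d)..ξ, g ζ)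
      -- the equation λx − (𝒜x − μx) = y, componentwise
      ∧ lam • x₀ - (a₀ x₀ + x₁ 0 - μ • x₀) = y₀
      ∧ (∀ᵐ ξ ∂(volume.restrict (Set.Icc (-d) 0)),
          lam • x₁ ξ - (a₁ ξ x₀ - g ξ - μ • x₁ ξ) = y₁ ξ)
      -- the explicit formulas
      ∧ x₀ = Ring.inverse
            ((lam + μ) • (ContinuousLinearMap.id ℝ (EuclideanSpace ℝ (Fin n)))
              - a₀ - ∫ r in Set.Icc (-d) 0, Real.exp ((lam + μ) * r) • a₁ r)
            (y₀ + ∫ r in Set.Icc (-d) 0, Real.exp ((lam + μ) * r) • y₁ r)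
      ∧ (∀ ξ ∈ Set.Icc (-d) 0,
          x₁ ξ = ∫ r in (-d)..ξ, Real.exp (-(lam + μ) * (ξ - r)) • (y₁ r + a₁ r x₀))
      -- uniqueness
      ∧ (∀ (x₀' : EuclideanSpace ℝ (Fin n)) (x₁' g' : ℝ → EuclideanSpace ℝ (Fin n)),
          MemLp g' 2 (volume.restrict (Set.Icc (-d) 0)) →
          (∀ ξ ∈ Set.Icc (-d) 0, x₁' ξ = ∫ ζ in (-d)..ξ, g' ζ) →
          lam • x₀' - (a₀ x₀' + x₁' 0 - μ • x₀') = y₀ →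
          (∀ᵐ ξ ∂(volume.restrict (Set.Icc (-d) 0)),
              lam • x₁' ξ - (a₁ ξ x₀' - g' ξ - μ • x₁' ξ) = y₁ ξ) →
          x₀' = x₀ ∧ ∀ ξ ∈ Set.Icc (-d) 0, x₁' ξ = x₁ ξ) := by
  have had : (-d : ℝ) ≤ 0 := by linarith
  have hμ₀1 : (1 : ℝ) ≤ μ₀ := by
    rw [hμ₀]
    have h1 := norm_nonneg a₀
    have h2 := le_max_left (‖a₀‖ + 1) ((1/2) * ∫ ξ in Set.Icc (-d) 0, ‖a₁ ξ‖^2)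
    linarith
  haveI hfin : IsFiniteMeasure (volume.restrict (Set.Icc (-d) (0:ℝ))) :=
    ⟨by rw [Measure.restrict_apply_univ]; exact measure_Icc_lt_top⟩
  set β : ℝ := lam + μ with hβdef
  have hβpos : 0 < β := by rw [hβdef]; linarith
  have hβne : β ≠ 0 := ne_of_gt hβpos
  have hμ₀β : μ₀ < β := by rw [hβdef]; linarith
  -- basic integrability
  have hy₁int : IntegrableOn y₁ (Set.Icc (-d) 0) volume := hy₁.integrable one_le_two
  have ha₁int : IntegrableOn a₁ (Set.Icc (-d) 0) volume := ha₁.integrable one_le_two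
  have happly : ∀ z : EuclideanSpace ℝ (Fin n),
      MemLp (fun r => a₁ r z) 2 (volume.restrict (Set.Icc (-d) 0)) := fun z =>
    (ContinuousLinearMap.apply ℝ (EuclideanSpace ℝ (Fin n)) z).comp_memLp' ha₁
  have hhmem : ∀ z, MemLp (fun r => y₁ r + a₁ r z) 2 (volume.restrict (Set.Icc (-d) 0)) :=
    fun z => hy₁.add (happly z)
  have hhint : ∀ z, IntegrableOn (fun r => y₁ r + a₁ r z) (Set.Icc (-d) 0) volume :=
    fun z => (hhmem z).integrable one_le_two
  set Ia := ∫ r in Set.Icc (-d) 0, Real.exp (β * r) • a₁ r with hIadef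
  set Iy := ∫ r in Set.Icc (-d) 0, Real.exp (β * r) • y₁ r with hIydef
  have hIaint : Integrable (fun r => Real.exp (β * r) • a₁ r)
      (volume.restrict (Set.Icc (-d) 0)) := exp_smul_integrableOn_Icc β (-d) 0 ha₁int
  -- quantitative bound on ‖Ia‖
  have hS : (∫ ξ in Set.Icc (-d) 0, ‖a₁ ξ‖^2) ≤ 2 * μ₀ := by
    have h := le_max_right (‖a₀‖ + 1) ((1/2) * ∫ ξ in Set.Icc (-d) 0, ‖a₁ ξ‖^2)
    rw [← hμ₀] at h; linarith
  have ha₁sq : Integrable (fun ξ => ‖a₁ ξ‖^2) (volume.restrict (Set.Icc (-d) 0)) := by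
    have h := ha₁.integrable_norm_rpow (by norm_num) (by norm_num)
    have h2 : (fun ξ => ‖a₁ ξ‖ ^ ((2:ENNReal).toReal)) = fun ξ => ‖a₁ ξ‖^2 := by
      funext ξ
      rw [show ((2:ENNReal).toReal) = ((2:ℕ):ℝ) by norm_num, Real.rpow_natCast]
    rwa [h2] at h
  have hexp2 : (∫ r in Set.Icc (-d) 0, Real.exp (2*β*r)) ≤ 1/(2*β) := by
    have h2βpos : (0:ℝ) < 2*β := by linarith
    have hval : (∫ r in Set.Icc (-d) 0, Real.exp (2*β*r))
        = (2*β)⁻¹ * (1 - Real.exp (2*β*(-d))) := by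
      rw [MeasureTheory.integral_Icc_eq_integral_Ioc, ← intervalIntegral.integral_of_le had,
        intervalIntegral.integral_comp_mul_left Real.exp (ne_of_gt h2βpos), integral_exp,
        smul_eq_mul, mul_zero, Real.exp_zero]
    rw [hval, one_div]
    have hE := (Real.exp_pos (2*β*(-d))).le
    calc (2*β)⁻¹ * (1 - Real.exp (2*β*(-d))) ≤ (2*β)⁻¹ * 1 := by
          apply mul_le_mul_of_nonneg_left _ (inv_nonneg.2 h2βpos.le)
          linarith
      _ = (2*β)⁻¹ := mul_one _
  have hIanorm : ‖Ia‖ ≤ 1 := by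
    rw [hIadef]
    refine le_trans (norm_integral_le_integral_norm _) ?_
    have hμpos : (0:ℝ) < μ₀ := by linarith
    have hpt : ∀ r ∈ Set.Icc (-d) (0:ℝ),
        ‖Real.exp (β*r) • a₁ r‖ ≤ μ₀ * Real.exp (2*β*r) + ‖a₁ r‖^2/(4*μ₀) := by
      intro r hr
      rw [norm_smul (Real.exp (β*r)) (a₁ r), Real.norm_eq_abs, Real.abs_exp]
      have he : Real.exp (2*β*r) = Real.exp (β*r) * Real.exp (β*r) := by
        rw [← Real.exp_add]; congr 1; ring
      rw [← sub_le_iff_le_add', le_div_iff₀ (by linarith : (0:ℝ) < 4*μ₀), he]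
      nlinarith [sq_nonneg (2*μ₀*Real.exp (β*r) - ‖a₁ r‖)]
    have hcont : Integrable (fun r => μ₀ * Real.exp (2*β*r))
        (volume.restrict (Set.Icc (-d) 0)) :=
      Continuous.integrableOn_Icc (continuous_const.mul
        (Real.continuous_exp.comp (continuous_const.mul continuous_id)))
    have hrhs_int : Integrable (fun r => μ₀ * Real.exp (2*β*r) + ‖a₁ r‖^2/(4*μ₀))
        (volume.restrict (Set.Icc (-d) 0)) := hcont.add (ha₁sq.div_const _)
    refine le_trans (setIntegral_mono_on hIaint.norm hrhs_int measurableSet_Icc hpt) ?_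
    rw [MeasureTheory.integral_add hcont (ha₁sq.div_const _),
      MeasureTheory.integral_const_mul, MeasureTheory.integral_div]
    have h1 : μ₀ * (∫ r in Set.Icc (-d) 0, Real.exp (2*β*r)) ≤ 1/2 := by
      calc μ₀ * (∫ r in Set.Icc (-d) 0, Real.exp (2*β*r)) ≤ μ₀ * (1/(2*β)) := by
            apply mul_le_mul_of_nonneg_left hexp2 hμpos.le
        _ ≤ 1/2 := by
            rw [mul_one_div, div_le_iff₀ (by linarith)]
            linarith
    have h2 : (∫ ξ in Set.Icc (-d) 0, ‖a₁ ξ‖^2)/(4*μ₀) ≤ 1/2 := by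
      rw [div_le_iff₀ (by linarith)]
      linarith
    linarith
  set T := β • (ContinuousLinearMap.id ℝ (EuclideanSpace ℝ (Fin n))) - a₀ - Ia with hTdef
  have hTunit : IsUnit T := by
    have ha₀n : ‖a₀‖ ≤ μ₀ - 1 := by
      have h := le_max_left (‖a₀‖ + 1) ((1/2) * ∫ ξ in Set.Icc (-d) 0, ‖a₁ ξ‖^2)
      rw [← hμ₀] at h; linarith
    have hsum : ‖a₀ + Ia‖ < β := lt_of_le_of_lt (norm_add_le _ _) (by linarith)
    have hfac : T = (β • (1 : EuclideanSpace ℝ (Fin n) →L[ℝ] EuclideanSpace ℝ (Fin n)))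
        * (1 - β⁻¹ • (a₀ + Ia)) := by
      rw [mul_sub, mul_one, clm_smul_mul, one_mul, smul_smul, mul_inv_cancel₀ hβne,
        one_smul, hTdef, ContinuousLinearMap.one_def, sub_sub]
    have hu1 : IsUnit (β • (1 : EuclideanSpace ℝ (Fin n) →L[ℝ] EuclideanSpace ℝ (Fin n))) := by
      refine ⟨⟨β • 1, β⁻¹ • 1, ?_, ?_⟩, rfl⟩
      · rw [clm_smul_mul, one_mul, smul_smul, mul_inv_cancel₀ hβne, one_smul]
      · rw [clm_smul_mul, one_mul, smul_smul, inv_mul_cancel₀ hβne, one_smul]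
    have hu2 : IsUnit (1 - β⁻¹ • (a₀ + Ia)) := by
      have hnlt : ‖β⁻¹ • (a₀ + Ia)‖ < 1 := by
        rw [norm_smul β⁻¹ (a₀ + Ia), norm_inv, Real.norm_eq_abs, abs_of_pos hβpos]
        have h := (div_lt_one hβpos).mpr hsum
        rwa [div_eq_inv_mul] at h
      exact (Units.oneSub _ hnlt).isUnit
    rw [hfac]
    exact hu1.mul hu2
  set x₀ : EuclideanSpace ℝ (Fin n) := Ring.inverse T (y₀ + Iy) with hx₀def
  have hTx₀ : T x₀ = y₀ + Iy := by
    rw [hx₀def, ← ContinuousLinearMap.mul_apply, Ring.mul_inverse_cancel T hTunit,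
      ContinuousLinearMap.one_apply]
  have hTinj : ∀ z : EuclideanSpace ℝ (Fin n), T z = y₀ + Iy → z = x₀ := by
    intro z hz
    have h1 : Ring.inverse T (T z) = Ring.inverse T (y₀ + Iy) := by rw [hz]
    rwa [← ContinuousLinearMap.mul_apply, Ring.inverse_mul_cancel T hTunit,
      ContinuousLinearMap.one_apply] at h1
  have hTapp : ∀ z, T z = β • z - a₀ z - Ia z := by
    intro z
    rw [hTdef]
    simp [ContinuousLinearMap.sub_apply, ContinuousLinearMap.smul_apply]
  have hval : ∀ z, (∫ s in (-d)..(0:ℝ), Real.exp (-(β * ((0:ℝ) - s))) • (y₁ s + a₁ s z))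
      = Iy + Ia z := by
    intro z
    have h1 : Set.EqOn (fun s => Real.exp (-(β * ((0:ℝ) - s))) • (y₁ s + a₁ s z))
        (fun s => Real.exp (β * s) • y₁ s + Real.exp (β * s) • (a₁ s z))
        (Set.uIcc (-d) 0) := by
      intro s _
      have he : Real.exp (-(β * ((0:ℝ) - s))) = Real.exp (β * s) := by congr 1; ring
      simp only [he, smul_add]
    rw [intervalIntegral.integral_congr h1, intervalIntegral.integral_of_le had,
      ← MeasureTheory.integral_Icc_eq_integral_Ioc,
      MeasureTheory.integral_add (exp_smul_integrableOn_Icc β _ _ hy₁int)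
        (exp_smul_integrableOn_Icc β _ _ ((happly z).integrable one_le_two)), hIydef]
    congr 1
    rw [hIadef, ContinuousLinearMap.integral_apply hIaint]
    simp only [ContinuousLinearMap.smul_apply]
  obtain ⟨W, hWc, hWform, hWuniq, hWeq⟩ :=
    volterra_package β (-d) 0 hβne had (fun r => y₁ r + a₁ r x₀) (hhint x₀)
  have hWmem : MemLp W 2 (volume.restrict (Set.Icc (-d) 0)) := by
    obtain ⟨C, hC⟩ := isCompact_Icc.exists_bound_of_continuousOn
      (hWc.continuousOn (s := Set.Icc (-d) (0:ℝ)))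
    refine MemLp.mono_exponent (q := ⊤) ?_ le_top
    apply memLp_top_of_bound hWc.aestronglyMeasurable C
    filter_upwards [ae_restrict_mem measurableSet_Icc] with ξ hξ using hC ξ hξ
  refine ⟨x₀, W, fun ξ => (y₁ ξ + a₁ ξ x₀) - β • W ξ, ?_, ?_, ?_, ?_, ?_, ?_, ?_⟩
  · exact (hhmem x₀).sub (hWmem.const_smul β)
  · intro ξ hξ
    show W ξ = ∫ ζ in (-d)..ξ, ((y₁ ζ + a₁ ζ x₀) - β • W ζ)
    have hint1 : IntervalIntegrable (fun r => y₁ r + a₁ r x₀) volume (-d) ξ := by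
      apply IntegrableOn.intervalIntegrable
      apply (hhint x₀).mono_set
      rw [Set.uIcc_of_le hξ.1]
      exact Set.Icc_subset_Icc le_rfl hξ.2
    have hint2 : IntervalIntegrable (fun r => β • W r) volume (-d) ξ :=
      (hWc.const_smul β).intervalIntegrable _ _
    rw [intervalIntegral.integral_sub hint1 hint2, intervalIntegral.integral_smul]
    exact hWeq ξ hξ
  · have hW0 : W 0 = Iy + Ia x₀ := by
      rw [hWform 0 ⟨had, le_refl 0⟩, hval x₀]
    have hy₀eq : y₀ = β • x₀ - a₀ x₀ - Ia x₀ - Iy := by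
      have h := hTx₀
      rw [hTapp] at h
      rw [h]; abel
    rw [hW0, hy₀eq, hβdef, add_smul]
    abel
  · apply Filter.Eventually.of_forall
    intro ξ
    show lam • W ξ - (a₁ ξ x₀ - ((y₁ ξ + a₁ ξ x₀) - β • W ξ) - μ • W ξ) = y₁ ξ
    rw [hβdef, add_smul]
    abel
  · exact hx₀def
  · intro ξ hξ
    rw [hWform ξ hξ]
    simp only [neg_mul]
  · intro x₀' x₁' g' hg'2 hx₁'def heq0 heqae
    have hg'int : IntegrableOn g' (Set.Icc (-d) 0) volume := hg'2.integrable one_le_two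
    have hg'I : Integrable ((Set.Icc (-d) 0).indicator g') volume :=
      (integrable_indicator_iff measurableSet_Icc).2 hg'int
    have hucont : Continuous (fun ξ => ∫ ζ in (-d)..ξ, (Set.Icc (-d) 0).indicator g' ζ) :=
      hg'I.continuous_primitive (-d)
    have huval : ∀ ξ ∈ Set.Icc (-d) (0:ℝ),
        x₁' ξ = ∫ ζ in (-d)..ξ, (Set.Icc (-d) 0).indicator g' ζ := by
      intro ξ hξ
      rw [hx₁'def ξ hξ]
      apply intervalIntegral.integral_congr
      intro s hs
      rw [Set.uIcc_of_le hξ.1] at hs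
      exact (Set.indicator_of_mem (Set.mem_Icc.mpr ⟨hs.1, hs.2.trans hξ.2⟩) g').symm
    obtain ⟨W', hW'c, hW'form, hW'uniq, hW'eq⟩ :=
      volterra_package β (-d) 0 hβne had (fun r => y₁ r + a₁ r x₀') (hhint x₀')
    have hx₁'cont : ContinuousOn x₁' (Set.Icc (-d) (0:ℝ)) :=
      hucont.continuousOn.congr huval
    have hx₁'eq : ∀ ξ ∈ Set.Icc (-d) (0:ℝ),
        x₁' ξ = (∫ s in (-d)..ξ, (y₁ s + a₁ s x₀')) - β • ∫ r in (-d)..ξ, x₁' r := by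
      intro ξ hξ
      have hsub : Set.Ioc (-d) ξ ⊆ Set.Icc (-d) (0:ℝ) :=
        fun s hs => Set.mem_Icc.mpr ⟨hs.1.le, hs.2.trans hξ.2⟩
      have hx₁'int : IntegrableOn x₁' (Set.Ioc (-d) ξ) volume := by
        apply IntegrableOn.congr_fun (hucont.integrableOn_Ioc) _ measurableSet_Ioc
        intro s hs
        exact (huval s (hsub hs)).symm
      have hae' : ∀ᵐ s ∂(volume.restrict (Set.Ioc (-d) ξ)),
          g' s = (y₁ s + a₁ s x₀') - β • x₁' s := by
        filter_upwards [ae_restrict_of_ae_restrict_of_subset hsub heqae] with s h1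
        rw [hβdef, add_smul, ← h1]
        abel
      calc x₁' ξ = ∫ s in Set.Ioc (-d) ξ, g' s := by
            rw [hx₁'def ξ hξ, intervalIntegral.integral_of_le hξ.1]
        _ = ∫ s in Set.Ioc (-d) ξ, ((y₁ s + a₁ s x₀') - β • x₁' s) :=
            MeasureTheory.integral_congr_ae hae'
        _ = (∫ s in Set.Ioc (-d) ξ, (y₁ s + a₁ s x₀'))
              - ∫ s in Set.Ioc (-d) ξ, β • x₁' s :=
            MeasureTheory.integral_sub ((hhint x₀').mono_set hsub) (hx₁'int.smul β)
        _ = (∫ s in (-d)..ξ, (y₁ s + a₁ s x₀')) - β • ∫ r in (-d)..ξ, x₁' r := by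
            rw [MeasureTheory.integral_smul, intervalIntegral.integral_of_le hξ.1,
              intervalIntegral.integral_of_le hξ.1]
    have hx₁'W' : ∀ ξ ∈ Set.Icc (-d) (0:ℝ), x₁' ξ = W' ξ :=
      hW'uniq x₁' hx₁'cont hx₁'eq
    have hW'0 : x₁' 0 = Iy + Ia x₀' := by
      rw [hx₁'W' 0 ⟨had, le_refl 0⟩, hW'form 0 ⟨had, le_refl 0⟩, hval x₀']
    have hTx₀' : T x₀' = y₀ + Iy := by
      rw [hTapp]
      rw [hW'0] at heq0
      rw [← heq0, hβdef, add_smul]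
      abel
    have hx₀'x₀ : x₀' = x₀ := hTinj x₀' hTx₀'
    refine ⟨hx₀'x₀, ?_⟩
    intro ξ hξ
    rw [hx₁'W' ξ hξ, hW'form ξ hξ, hWform ξ hξ, hx₀'x₀]
end
end

section
/- For every μ > μ₀, the linear map T_μ is a bounded operator on X (i.e. there exists K ≥ 0 with |T_μ z|_X ≤ K |z|_X for all z ∈ X), and moreover T_μ is a compact operator on X. -/
open MeasureTheory

private lemma int_norm_le_gen {α : Type*} {m : MeasurableSpace α} {E : Type*} [NormedAddCommGroup E]
    (ν : Measure α) [IsFiniteMeasure ν] {f : α → E} (hf : MemLp f 2 ν) :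
    ∫ r, ‖f r‖ ∂ν ≤ Real.sqrt ((ν Set.univ).toReal) * (eLpNorm f 2 ν).toReal := by
  have h1 : eLpNorm f 1 ν ≤ eLpNorm f 2 ν * ν Set.univ ^ (1/2 : ℝ) := by
    have h := eLpNorm_le_eLpNorm_mul_rpow_measure_univ (μ := ν) (f := f)
      (p := 1) (q := 2) (by norm_num) hf.1
    norm_num at h
    exact h
  have h2 : ∫ r, ‖f r‖ ∂ν = (eLpNorm f 1 ν).toReal := by
    rw [integral_norm_eq_lintegral_enorm hf.1, eLpNorm_one_eq_lintegral_enorm]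
  rw [h2, Real.sqrt_eq_rpow, ENNReal.toReal_rpow, mul_comm, ← ENNReal.toReal_mul]
  apply ENNReal.toReal_mono _ h1
  exact ENNReal.mul_ne_top hf.2.ne
    (ENNReal.rpow_ne_top_of_nonneg (by norm_num) (measure_ne_top ν _))

variable {E : Type*} [NormedAddCommGroup E] [NormedSpace ℝ E]

private lemma restrict_eq_restrict {d a b : ℝ} (hsub : Set.Ioc a b ⊆ Set.Icc (-d) 0) :
    MeasureTheory.volume.restrict (Set.Ioc a b)
      = (MeasureTheory.volume.restrict (Set.Icc (-d) 0)).restrict (Set.Ioc a b) := by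
  rw [Measure.restrict_restrict measurableSet_Ioc, Set.inter_eq_self_of_subset_left hsub]

/-- L¹-L² segment bound. -/
private lemma seg_bound {d : ℝ} {g : ℝ → E}
    (hg : MemLp g 2 (MeasureTheory.volume.restrict (Set.Icc (-d) 0)))
    {a b : ℝ} (hab : a ≤ b) (hsub : Set.Ioc a b ⊆ Set.Icc (-d) 0) :
    ∫ r in Set.Ioc a b, ‖g r‖
      ≤ Real.sqrt (b - a) * (eLpNorm g 2 (MeasureTheory.volume.restrict (Set.Icc (-d) 0))).toReal := by
  set ν := MeasureTheory.volume.restrict (Set.Icc (-d) 0)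
  have hre : MeasureTheory.volume.restrict (Set.Ioc a b) = ν.restrict (Set.Ioc a b) :=
    restrict_eq_restrict hsub
  have hg' : MemLp g 2 (MeasureTheory.volume.restrict (Set.Ioc a b)) := by
    rw [hre]; exact hg.restrict _
  have h := int_norm_le_gen (MeasureTheory.volume.restrict (Set.Ioc a b)) hg'
  have huniv : ((MeasureTheory.volume.restrict (Set.Ioc a b)) Set.univ).toReal = b - a := by
    rw [Measure.restrict_apply_univ, Real.volume_Ioc, ENNReal.toReal_ofReal (by linarith)]
  rw [huniv] at h
  refine h.trans ?_
  have hmono : (eLpNorm g 2 (MeasureTheory.volume.restrict (Set.Ioc a b))).toReal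
      ≤ (eLpNorm g 2 ν).toReal := by
    refine ENNReal.toReal_mono hg.2.ne ?_
    rw [hre]
    exact eLpNorm_mono_measure _ Measure.restrict_le_self
  exact mul_le_mul_of_nonneg_left hmono (Real.sqrt_nonneg _)

private lemma integrableOn_of_memL2 {d : ℝ} {g : ℝ → E}
    (hg : MemLp g 2 (MeasureTheory.volume.restrict (Set.Icc (-d) 0)))
    {a b : ℝ} (hsub : Set.Ioc a b ⊆ Set.Icc (-d) 0) :
    IntegrableOn g (Set.Ioc a b) MeasureTheory.volume := by
  rw [IntegrableOn, restrict_eq_restrict hsub]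
  exact (hg.integrable one_le_two).restrict

private lemma II_ker {d μ : ℝ} (hμ : 0 < μ) {g : ℝ → E}
    (hg : MemLp g 2 (MeasureTheory.volume.restrict (Set.Icc (-d) 0)))
    {a b ξ : ℝ} (hab : a ≤ b) (hbξ : b ≤ ξ) (hsub : Set.Ioc a b ⊆ Set.Icc (-d) 0) :
    IntervalIntegrable (fun r => Real.exp (-μ * (ξ - r)) • g r) MeasureTheory.volume a b := by
  rw [intervalIntegrable_iff, Set.uIoc_of_le hab]
  have hint : IntegrableOn g (Set.Ioc a b) MeasureTheory.volume := integrableOn_of_memL2 hg hsub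
  have hφ : MemLp (fun r => Real.exp (-μ * (ξ - r))) ⊤
      (MeasureTheory.volume.restrict (Set.Ioc a b)) := by
    refine memLp_top_of_bound (Continuous.aestronglyMeasurable (by continuity)) 1 ?_
    filter_upwards [ae_restrict_mem measurableSet_Ioc] with r hr
    rw [Real.norm_eq_abs, abs_of_pos (Real.exp_pos _)]
    refine Real.exp_le_one_iff.mpr ?_
    nlinarith [hr.2.trans hbξ]
  exact hint.smul_of_top_right hφ

private lemma exp_diff_le {s t : ℝ} (hst : s ≤ t) (hs : 0 ≤ s) :
    |Real.exp (-t) - Real.exp (-s)| ≤ t - s := by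
  have h0 : Real.exp (-t) ≤ Real.exp (-s) := Real.exp_le_exp.mpr (by linarith)
  rw [abs_of_nonpos (by linarith), neg_sub]
  have he : Real.exp (-t) = Real.exp (-s) * Real.exp (-(t - s)) := by
    rw [← Real.exp_add]; ring_nf
  have h1 : Real.exp (-s) ≤ 1 := Real.exp_le_one_iff.mpr (by linarith)
  have h2 : 0 ≤ 1 - Real.exp (-(t - s)) := by
    have : Real.exp (-(t - s)) ≤ 1 := Real.exp_le_one_iff.mpr (by linarith)
    linarith
  have h3 : 1 - Real.exp (-(t - s)) ≤ t - s := by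
    have := Real.add_one_le_exp (-(t - s)); linarith
  calc Real.exp (-s) - Real.exp (-t) = Real.exp (-s) * (1 - Real.exp (-(t - s))) := by
        rw [he]; ring
    _ ≤ 1 * (1 - Real.exp (-(t - s))) := mul_le_mul_of_nonneg_right h1 h2
    _ ≤ t - s := by linarith

private lemma holder_bound {d μ : ℝ} (hd : 0 < d) (hμ : 0 < μ) {g : ℝ → E}
    (hg : MemLp g 2 (MeasureTheory.volume.restrict (Set.Icc (-d) 0)))
    {ξ η : ℝ} (hξ : ξ ∈ Set.Icc (-d) 0) (hη : η ∈ Set.Icc (-d) 0) (hle : η ≤ ξ) :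
    ‖(∫ r in (-d)..ξ, Real.exp (-μ * (ξ - r)) • g r)
      - ∫ r in (-d)..η, Real.exp (-μ * (η - r)) • g r‖
    ≤ (1 + μ * d) * (eLpNorm g 2 (MeasureTheory.volume.restrict (Set.Icc (-d) 0))).toReal
        * Real.sqrt (ξ - η) := by
  obtain ⟨hdξ, hξ0⟩ := hξ
  obtain ⟨hdη, hη0⟩ := hη
  set NG := (eLpNorm g 2 (MeasureTheory.volume.restrict (Set.Icc (-d) 0))).toReal with hNGdef
  have hNG0 : 0 ≤ NG := ENNReal.toReal_nonneg
  have hsub1 : Set.Ioc (-d) η ⊆ Set.Icc (-d) 0 := fun r hr => ⟨hr.1.le, hr.2.trans hη0⟩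
  have hsub2 : Set.Ioc η ξ ⊆ Set.Icc (-d) 0 := fun r hr => ⟨(lt_of_le_of_lt hdη hr.1).le, hr.2.trans hξ0⟩
  have II₁ : IntervalIntegrable (fun r => Real.exp (-μ * (ξ - r)) • g r)
      MeasureTheory.volume (-d) η := II_ker hμ hg hdη hle hsub1
  have II₂ : IntervalIntegrable (fun r => Real.exp (-μ * (ξ - r)) • g r)
      MeasureTheory.volume η ξ := II_ker hμ hg hle le_rfl hsub2
  have II₃ : IntervalIntegrable (fun r => Real.exp (-μ * (η - r)) • g r)
      MeasureTheory.volume (-d) η := II_ker hμ hg hdη le_rfl hsub1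
  have hsplit : (∫ r in (-d)..ξ, Real.exp (-μ * (ξ - r)) • g r)
      = (∫ r in (-d)..η, Real.exp (-μ * (ξ - r)) • g r)
        + ∫ r in η..ξ, Real.exp (-μ * (ξ - r)) • g r :=
    (intervalIntegral.integral_add_adjacent_intervals II₁ II₂).symm
  rw [hsplit]
  have hA : ‖(∫ r in (-d)..η, Real.exp (-μ * (ξ - r)) • g r)
      - ∫ r in (-d)..η, Real.exp (-μ * (η - r)) • g r‖ ≤ μ * d * NG * Real.sqrt (ξ - η) := by
    rw [← intervalIntegral.integral_sub II₁ II₃,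
      intervalIntegral.integral_of_le hdη]
    refine (norm_integral_le_integral_norm _).trans ?_
    have hintg : IntegrableOn (fun r => ‖g r‖) (Set.Ioc (-d) η) MeasureTheory.volume :=
      (integrableOn_of_memL2 hg hsub1).norm
    have hmono : ∫ r in Set.Ioc (-d) η, ‖Real.exp (-μ * (ξ - r)) • g r
        - Real.exp (-μ * (η - r)) • g r‖
        ≤ ∫ r in Set.Ioc (-d) η, μ * (ξ - η) * ‖g r‖ := by
      refine integral_mono_of_nonneg (Filter.Eventually.of_forall fun r => norm_nonneg _)
        (hintg.const_mul _) ?_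
      filter_upwards [ae_restrict_mem measurableSet_Ioc] with r hr
      rw [← sub_smul, norm_smul, Real.norm_eq_abs]
      have hkey : |Real.exp (-μ * (ξ - r)) - Real.exp (-μ * (η - r))| ≤ μ * (ξ - η) := by
        have h := exp_diff_le (s := μ * (η - r)) (t := μ * (ξ - r))
          (by nlinarith [hr.2]) (by nlinarith [hr.2])
        have e1 : -(μ * (ξ - r)) = -μ * (ξ - r) := by ring
        have e2 : -(μ * (η - r)) = -μ * (η - r) := by ring
        rw [e1, e2] at h
        calc |Real.exp (-μ * (ξ - r)) - Real.exp (-μ * (η - r))| ≤ μ * (ξ - r) - μ * (η - r) := h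
          _ = μ * (ξ - η) := by ring
      exact mul_le_mul_of_nonneg_right hkey (norm_nonneg _)
    refine hmono.trans ?_
    rw [MeasureTheory.integral_const_mul]
    have hseg : ∫ r in Set.Ioc (-d) η, ‖g r‖ ≤ Real.sqrt d * NG := by
      refine (seg_bound hg hdη hsub1).trans ?_
      exact mul_le_mul_of_nonneg_right
        (Real.sqrt_le_sqrt (by linarith)) hNG0
    have hμξη : 0 ≤ μ * (ξ - η) := by nlinarith
    refine (mul_le_mul_of_nonneg_left hseg hμξη).trans ?_
    set s := Real.sqrt (ξ - η) with hsdef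
    set t := Real.sqrt d with htdef
    have hs0 : 0 ≤ s := Real.sqrt_nonneg _
    have ht0 : 0 ≤ t := Real.sqrt_nonneg _
    have hs1 : s ≤ t := Real.sqrt_le_sqrt (by linarith)
    have hs2 : s * s = ξ - η := Real.mul_self_sqrt (by linarith)
    have hs3 : t * t = d := Real.mul_self_sqrt hd.le
    rw [← hs2, ← hs3]
    nlinarith [mul_nonneg (mul_nonneg (mul_nonneg hμ.le hNG0)
      (mul_nonneg hs0 ht0)) (sub_nonneg.mpr hs1)]
  have hB : ‖∫ r in η..ξ, Real.exp (-μ * (ξ - r)) • g r‖ ≤ NG * Real.sqrt (ξ - η) := by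
    rw [intervalIntegral.integral_of_le hle]
    refine (norm_integral_le_integral_norm _).trans ?_
    have hintg : IntegrableOn (fun r => ‖g r‖) (Set.Ioc η ξ) MeasureTheory.volume :=
      (integrableOn_of_memL2 hg hsub2).norm
    have hmono : ∫ r in Set.Ioc η ξ, ‖Real.exp (-μ * (ξ - r)) • g r‖
        ≤ ∫ r in Set.Ioc η ξ, ‖g r‖ := by
      refine integral_mono_of_nonneg (Filter.Eventually.of_forall fun r => norm_nonneg _)
        hintg ?_
      filter_upwards [ae_restrict_mem measurableSet_Ioc] with r hr
      rw [norm_smul, Real.norm_eq_abs, abs_of_pos (Real.exp_pos _)]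
      have : Real.exp (-μ * (ξ - r)) ≤ 1 := Real.exp_le_one_iff.mpr (by nlinarith [hr.2])
      nlinarith [norm_nonneg (g r)]
    refine hmono.trans ?_
    refine (seg_bound hg hle hsub2).trans ?_
    rw [mul_comm]
  calc ‖(∫ r in (-d)..η, Real.exp (-μ * (ξ - r)) • g r)
        + (∫ r in η..ξ, Real.exp (-μ * (ξ - r)) • g r)
        - ∫ r in (-d)..η, Real.exp (-μ * (η - r)) • g r‖
      ≤ ‖(∫ r in (-d)..η, Real.exp (-μ * (ξ - r)) • g r)
          - ∫ r in (-d)..η, Real.exp (-μ * (η - r)) • g r‖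
        + ‖∫ r in η..ξ, Real.exp (-μ * (ξ - r)) • g r‖ := by
        rw [add_sub_right_comm]; exact norm_add_le _ _
    _ ≤ μ * d * NG * Real.sqrt (ξ - η) + NG * Real.sqrt (ξ - η) := add_le_add hA hB
    _ = (1 + μ * d) * NG * Real.sqrt (ξ - η) := by ring

private lemma sup_bound {d μ : ℝ} (hd : 0 < d) (hμ : 0 < μ) {g : ℝ → E}
    (hg : MemLp g 2 (MeasureTheory.volume.restrict (Set.Icc (-d) 0)))
    {ξ : ℝ} (hξ : ξ ∈ Set.Icc (-d) 0) :
    ‖∫ r in (-d)..ξ, Real.exp (-μ * (ξ - r)) • g r‖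
      ≤ (1 + μ * d) * (eLpNorm g 2 (MeasureTheory.volume.restrict (Set.Icc (-d) 0))).toReal
          * Real.sqrt d := by
  have h := holder_bound hd hμ hg hξ ⟨le_refl (-d), by linarith⟩ hξ.1
  rw [intervalIntegral.integral_same, sub_zero] at h
  refine h.trans ?_
  have h1 : Real.sqrt (ξ - -d) ≤ Real.sqrt d := Real.sqrt_le_sqrt (by linarith [hξ.2])
  have h2 : 0 ≤ (1 + μ * d) * (eLpNorm g 2 (MeasureTheory.volume.restrict (Set.Icc (-d) 0))).toReal :=
    mul_nonneg (by nlinarith) ENNReal.toReal_nonneg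
  exact mul_le_mul_of_nonneg_left h1 h2

private lemma int_exp_bound {d μ : ℝ} (hd : 0 < d) (hμ : 0 < μ) {f : ℝ → E}
    (hf : MemLp f 2 (MeasureTheory.volume.restrict (Set.Icc (-d) 0))) :
    ‖∫ r in Set.Icc (-d) 0, Real.exp (μ * r) • f r‖
      ≤ Real.sqrt d * (eLpNorm f 2 (MeasureTheory.volume.restrict (Set.Icc (-d) 0))).toReal := by
  set ν := MeasureTheory.volume.restrict (Set.Icc (-d) 0) with hν
  refine (norm_integral_le_integral_norm _).trans ?_
  have hmono : ∫ r, ‖Real.exp (μ * r) • f r‖ ∂ν ≤ ∫ r, ‖f r‖ ∂ν := by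
    refine integral_mono_of_nonneg (Filter.Eventually.of_forall fun r => norm_nonneg _)
      (hf.integrable one_le_two).norm ?_
    filter_upwards [ae_restrict_mem measurableSet_Icc] with r hr
    rw [norm_smul, Real.norm_eq_abs, abs_of_pos (Real.exp_pos _)]
    have h1 : Real.exp (μ * r) ≤ 1 := Real.exp_le_one_iff.mpr (by nlinarith [hr.2])
    nlinarith [norm_nonneg (f r)]
  refine hmono.trans ?_
  have h := int_norm_le_gen ν hf
  have huniv : (ν Set.univ).toReal = d := by
    rw [hν, Measure.restrict_apply_univ, Real.volume_Icc]
    have he : (0 : ℝ) - -d = d := by ring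
    rw [he, ENNReal.toReal_ofReal hd.le]
  rwa [huniv] at h

private lemma mod_aux {C ε : ℝ} (hC : 0 ≤ C) (hε : 0 < ε) :
    ∃ δ > 0, ∀ t : ℝ, 0 ≤ t → t < δ → C * Real.sqrt t < ε := by
  refine ⟨(ε / (C + 1)) ^ 2, by positivity, fun t ht hlt => ?_⟩
  have h1 : Real.sqrt t < ε / (C + 1) := by
    have h := Real.sqrt_lt_sqrt ht hlt
    rwa [Real.sqrt_sq (by positivity)] at h
  have hC1 : 0 < C + 1 := by linarith
  calc C * Real.sqrt t ≤ (C + 1) * Real.sqrt t := by nlinarith [Real.sqrt_nonneg t]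
    _ < (C + 1) * (ε / (C + 1)) := mul_lt_mul_of_pos_left h1 hC1
    _ = ε := by field_simp

private lemma continuous_of_sqrt_mod {α : Type*} [PseudoMetricSpace α]
    {F : α → E} {C : ℝ} (hC : 0 ≤ C)
    (h : ∀ x y, dist (F x) (F y) ≤ C * Real.sqrt (dist x y)) : Continuous F := by
  rw [Metric.continuous_iff]
  intro x ε hε
  obtain ⟨δ, hδ, hδ'⟩ := mod_aux hC hε
  exact ⟨δ, hδ, fun y hy => (h y x).trans_lt (hδ' _ dist_nonneg hy)⟩

private lemma memL2_apply {n : ℕ} {d : ℝ}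
    {a₁ : ℝ → EuclideanSpace ℝ (Fin n) →L[ℝ] EuclideanSpace ℝ (Fin n)}
    (ha₁ : MemLp a₁ 2 (MeasureTheory.volume.restrict (Set.Icc (-d) 0)))
    (v : EuclideanSpace ℝ (Fin n)) :
    MemLp (fun r => a₁ r v) 2 (MeasureTheory.volume.restrict (Set.Icc (-d) 0)) := by
  refine MemLp.of_le_mul (c := ‖v‖) ha₁
    ((ContinuousLinearMap.apply ℝ (EuclideanSpace ℝ (Fin n)) v).continuous.comp_aestronglyMeasurable
      ha₁.1) (Filter.Eventually.of_forall fun r => ?_)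
  rw [mul_comm]
  exact (a₁ r).le_opNorm v

private lemma eLpNorm_apply_le {n : ℕ} {d : ℝ}
    {a₁ : ℝ → EuclideanSpace ℝ (Fin n) →L[ℝ] EuclideanSpace ℝ (Fin n)}
    (ha₁ : MemLp a₁ 2 (MeasureTheory.volume.restrict (Set.Icc (-d) 0)))
    (v : EuclideanSpace ℝ (Fin n)) :
    (eLpNorm (fun r => a₁ r v) 2 (MeasureTheory.volume.restrict (Set.Icc (-d) 0))).toReal
      ≤ (eLpNorm a₁ 2 (MeasureTheory.volume.restrict (Set.Icc (-d) 0))).toReal * ‖v‖ := by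
  set ν := MeasureTheory.volume.restrict (Set.Icc (-d) 0)
  have h1 : eLpNorm (fun r => a₁ r v) 2 ν ≤ eLpNorm ((‖v‖ : ℝ) • a₁) 2 ν := by
    refine eLpNorm_mono_ae (Filter.Eventually.of_forall fun r => ?_)
    have hns : ‖(‖v‖ : ℝ) • a₁ r‖ = ‖v‖ * ‖a₁ r‖ := by
      rw [norm_smul (‖v‖) (a₁ r), Real.norm_eq_abs, abs_of_nonneg (norm_nonneg v)]
    rw [Pi.smul_apply, hns, mul_comm]
    exact (a₁ r).le_opNorm v
  have h2 : eLpNorm ((‖v‖ : ℝ) • a₁) 2 ν = (‖(‖v‖ : ℝ)‖₊ : ENNReal) * eLpNorm a₁ 2 ν :=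
    (eLpNorm_const_smul (‖v‖ : ℝ) a₁ 2 ν).trans (by rw [enorm_eq_nnnorm])
  have h3 : (eLpNorm (fun r => a₁ r v) 2 ν).toReal
      ≤ ((‖(‖v‖ : ℝ)‖₊ : ENNReal) * eLpNorm a₁ 2 ν).toReal := by
    refine ENNReal.toReal_mono (ENNReal.mul_ne_top ENNReal.coe_ne_top ha₁.2.ne) (h1.trans h2.le)
  refine h3.trans (le_of_eq ?_)
  rw [ENNReal.toReal_mul, mul_comm]
  congr 1
  simp

private lemma norm_le_add_of_L2 {α β : Type*} [SeminormedAddCommGroup α] [SeminormedAddCommGroup β]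
    (x : WithLp 2 (α × β)) : ‖x‖ ≤ ‖x.fst‖ + ‖x.snd‖ := by
  have h := WithLp.prod_norm_sq_eq_of_L2 x
  nlinarith [norm_nonneg x, norm_nonneg x.fst, norm_nonneg x.snd]

private lemma fst_norm_le_of_L2 {α β : Type*} [SeminormedAddCommGroup α] [SeminormedAddCommGroup β]
    (x : WithLp 2 (α × β)) : ‖x.fst‖ ≤ ‖x‖ := by
  have h := WithLp.prod_norm_sq_eq_of_L2 x
  nlinarith [norm_nonneg x, norm_nonneg x.fst, norm_nonneg x.snd]

private lemma snd_norm_le_of_L2 {α β : Type*} [SeminormedAddCommGroup α] [SeminormedAddCommGroup β]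
    (x : WithLp 2 (α × β)) : ‖x.snd‖ ≤ ‖x‖ := by
  have h := WithLp.prod_norm_sq_eq_of_L2 x
  nlinarith [norm_nonneg x, norm_nonneg x.fst, norm_nonneg x.snd]
open MeasureTheory RealInnerProductSpace
noncomputable section

/-- The Hilbert space X = ℝⁿ × L²([-d,0];ℝⁿ) (with the ℓ²-product inner product). -/
abbrev XSp (n : ℕ) (d : ℝ) :=
  WithLp 2 (EuclideanSpace ℝ (Fin n) ×
    Lp (EuclideanSpace ℝ (Fin n)) 2 (volume.restrict (Set.Icc (-d) 0)))

set_option maxHeartbeats 4000000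

/-- For μ > μ₀, the operator T_μ (= (𝒜 − μI)⁻¹) is a bounded linear
operator on X and it is compact. -/
theorem Tmu_bounded_and_compact
    (n : ℕ) (hn : 1 ≤ n) (d : ℝ) (hd : 0 < d)
    (a₀ : EuclideanSpace ℝ (Fin n) →L[ℝ] EuclideanSpace ℝ (Fin n))
    (a₁ : ℝ → EuclideanSpace ℝ (Fin n) →L[ℝ] EuclideanSpace ℝ (Fin n))
    (ha₁ : MemLp a₁ 2 (volume.restrict (Set.Icc (-d) 0)))
    (μ₀ : ℝ)
    (hμ₀ : μ₀ = max (‖a₀‖ + 1) ((1/2) * ∫ ξ in Set.Icc (-d) 0, ‖a₁ ξ‖^2))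
    (μ : ℝ) (hμ : μ₀ < μ)
    (T : XSp n d →ₗ[ℝ] XSp n d)
    -- first component of T_μ z
    (hT₁ : ∀ z : XSp n d,
      (WithLp.equiv 2 _ (T z)).1 = -(Ring.inverse
        (μ • (ContinuousLinearMap.id ℝ (EuclideanSpace ℝ (Fin n)))
          - a₀ - ∫ r in Set.Icc (-d) 0, Real.exp (μ * r) • a₁ r)
        ((WithLp.equiv 2 _ z).1
          + ∫ r in Set.Icc (-d) 0, Real.exp (μ * r) • (WithLp.equiv 2 _ z).2 r)))
    -- second component of T_μ z (as an element of L², i.e. a.e.)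
    (hT₂ : ∀ z : XSp n d,
      ∀ᵐ ξ ∂(volume.restrict (Set.Icc (-d) 0)),
        (WithLp.equiv 2 _ (T z)).2 ξ
          = ∫ r in (-d)..ξ, Real.exp (-μ * (ξ - r)) •
              (-((WithLp.equiv 2 _ z).2 r) + a₁ r (WithLp.equiv 2 _ z).1)) :
    (∃ K : ℝ, 0 ≤ K ∧ ∀ z : XSp n d, ‖T z‖ ≤ K * ‖z‖)
    ∧ IsCompactOperator T := by
  have hd0 : (-d : ℝ) ≤ 0 := by linarith
  have hμpos : 0 < μ := by
    have h1 : ‖a₀‖ + 1 ≤ μ₀ := by rw [hμ₀]; exact le_max_left _ _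
    have h2 := norm_nonneg a₀
    linarith
  set ν := MeasureTheory.volume.restrict (Set.Icc (-d : ℝ) 0) with hν
  set Ca := (eLpNorm a₁ 2 ν).toReal with hCadef
  have hCa0 : 0 ≤ Ca := ENNReal.toReal_nonneg
  set KN := ‖Ring.inverse
        (μ • (ContinuousLinearMap.id ℝ (EuclideanSpace ℝ (Fin n)))
          - a₀ - ∫ r in Set.Icc (-d) 0, Real.exp (μ * r) • a₁ r)‖ with hKNdef
  have hKN0 : 0 ≤ KN := by rw [hKNdef]; exact norm_nonneg _
  -- component norms dominated by total norm
  have hz1le : ∀ z : XSp n d, ‖(WithLp.equiv 2 _ z).1‖ ≤ ‖z‖ := by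
    intro z; rw [WithLp.equiv_apply, WithLp.ofLp_fst]; exact fst_norm_le_of_L2 z
  have hz2le : ∀ z : XSp n d, ‖(WithLp.equiv 2 _ z).2‖ ≤ ‖z‖ := by
    intro z; rw [WithLp.equiv_apply, WithLp.ofLp_snd]; exact snd_norm_le_of_L2 z
  -- the "g" function of each z is in L²
  have hgmem : ∀ z : XSp n d,
      MemLp (fun r => -((WithLp.equiv 2 _ z).2 r) + a₁ r ((WithLp.equiv 2 _ z).1)) 2 ν :=
    fun z => ((Lp.memLp ((WithLp.equiv 2 _ z).2)).neg).add (memL2_apply ha₁ _)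
  -- bound on the L² norm of g
  have hNG : ∀ z : XSp n d,
      (eLpNorm (fun r => -((WithLp.equiv 2 _ z).2 r) + a₁ r ((WithLp.equiv 2 _ z).1)) 2 ν).toReal
        ≤ (1 + Ca) * ‖z‖ := by
    intro z
    have h1 : eLpNorm (fun r => -((WithLp.equiv 2 _ z).2 r) + a₁ r ((WithLp.equiv 2 _ z).1)) 2 ν
        ≤ eLpNorm (⇑((WithLp.equiv 2 _ z).2)) 2 ν
          + eLpNorm (fun r => a₁ r ((WithLp.equiv 2 _ z).1)) 2 ν := by
      have hadd := eLpNorm_add_le (((Lp.memLp ((WithLp.equiv 2 _ z).2)).neg).1)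
        (memL2_apply ha₁ ((WithLp.equiv 2 _ z).1)).1 one_le_two
      rw [eLpNorm_neg] at hadd
      exact hadd
    have hfin1 : eLpNorm (⇑((WithLp.equiv 2 _ z).2)) 2 ν ≠ ⊤ := (Lp.memLp _).2.ne
    have hfin2 : eLpNorm (fun r => a₁ r ((WithLp.equiv 2 _ z).1)) 2 ν ≠ ⊤ :=
      (memL2_apply ha₁ _).2.ne
    have h2 := ENNReal.toReal_mono (ENNReal.add_ne_top.mpr ⟨hfin1, hfin2⟩) h1
    rw [ENNReal.toReal_add hfin1 hfin2] at h2
    refine h2.trans ?_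
    have h3 : (eLpNorm (⇑((WithLp.equiv 2 _ z).2)) 2 ν).toReal = ‖(WithLp.equiv 2 _ z).2‖ :=
      (Lp.norm_def _).symm
    have h4 := eLpNorm_apply_le ha₁ ((WithLp.equiv 2 _ z).1)
    have h5 := hz1le z
    have h6 := hz2le z
    have h7 := norm_nonneg ((WithLp.equiv 2 _ z).1)
    rw [h3]
    nlinarith [norm_nonneg z]
  -- first component bound
  have hb1 : ∀ z : XSp n d,
      ‖(WithLp.equiv 2 _ (T z)).1‖ ≤ KN * ((1 + Real.sqrt d) * ‖z‖) := by
    intro z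
    rw [hT₁ z, norm_neg]
    refine (ContinuousLinearMap.le_opNorm _ _).trans ?_
    rw [← hKNdef]
    refine mul_le_mul_of_nonneg_left ?_ hKN0
    refine (norm_add_le _ _).trans ?_
    have h2 := int_exp_bound hd hμpos (Lp.memLp ((WithLp.equiv 2 _ z).2))
    have h3 : (eLpNorm (⇑((WithLp.equiv 2 _ z).2)) 2 ν).toReal = ‖(WithLp.equiv 2 _ z).2‖ :=
      (Lp.norm_def _).symm
    rw [h3] at h2
    have h5 := hz1le z
    have h6 := hz2le z
    have h7 := Real.sqrt_nonneg d
    nlinarith [norm_nonneg ((WithLp.equiv 2 _ z).2)]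
  -- second component bound
  have hb2 : ∀ z : XSp n d,
      ‖(WithLp.equiv 2 _ (T z)).2‖ ≤ (measureUnivNNReal ν : ℝ) ^ ((2 : ENNReal).toReal)⁻¹
        * ((1 + μ * d) * ((1 + Ca) * ‖z‖) * Real.sqrt d) := by
    intro z
    have hC0 : 0 ≤ (1 + μ * d) * ((1 + Ca) * ‖z‖) * Real.sqrt d :=
      mul_nonneg (mul_nonneg (by nlinarith [mul_pos hμpos hd]) (mul_nonneg (by linarith) (norm_nonneg z)))
        (Real.sqrt_nonneg d)
    refine Lp.norm_le_of_ae_bound hC0 ?_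
    filter_upwards [hT₂ z, ae_restrict_mem measurableSet_Icc] with ξ hξeq hξmem
    rw [hξeq]
    refine (sup_bound hd hμpos (hgmem z) hξmem).trans ?_
    have hle := hNG z
    have h1 : (0:ℝ) ≤ 1 + μ * d := by nlinarith [mul_pos hμpos hd]
    exact mul_le_mul_of_nonneg_right (mul_le_mul_of_nonneg_left hle h1) (Real.sqrt_nonneg d)
  constructor
  · -- boundedness
    refine ⟨KN * (1 + Real.sqrt d)
      + (measureUnivNNReal ν : ℝ) ^ ((2 : ENNReal).toReal)⁻¹
          * ((1 + μ * d) * (1 + Ca) * Real.sqrt d), ?_, ?_⟩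
    · have h1 : (0:ℝ) ≤ (measureUnivNNReal ν : ℝ) ^ ((2 : ENNReal).toReal)⁻¹ := by positivity
      have h2 := Real.sqrt_nonneg d
      nlinarith [mul_nonneg h1 (mul_nonneg (mul_nonneg
        (by nlinarith [mul_pos hμpos hd] : (0:ℝ) ≤ 1 + μ * d) (by linarith : (0:ℝ) ≤ 1 + Ca)) h2)]
    · intro z
      have h := norm_le_add_of_L2 (T z)
      have he1 : ‖(T z).fst‖ = ‖(WithLp.equiv 2 _ (T z)).1‖ := by rw [WithLp.equiv_apply, WithLp.ofLp_fst]
      have he2 : ‖(T z).snd‖ = ‖(WithLp.equiv 2 _ (T z)).2‖ := by rw [WithLp.equiv_apply, WithLp.ofLp_snd]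
      rw [he1, he2] at h
      refine h.trans ?_
      have h1 := hb1 z
      have h2 := hb2 z
      calc ‖(WithLp.equiv 2 _ (T z)).1‖ + ‖(WithLp.equiv 2 _ (T z)).2‖
          ≤ KN * ((1 + Real.sqrt d) * ‖z‖)
            + (measureUnivNNReal ν : ℝ) ^ ((2 : ENNReal).toReal)⁻¹
              * ((1 + μ * d) * ((1 + Ca) * ‖z‖) * Real.sqrt d) := add_le_add h1 h2
        _ = (KN * (1 + Real.sqrt d)
            + (measureUnivNNReal ν : ℝ) ^ ((2 : ENNReal).toReal)⁻¹
              * ((1 + μ * d) * (1 + Ca) * Real.sqrt d)) * ‖z‖ := by ring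
  · -- compactness
    haveI : CompactSpace (Set.Icc (-d : ℝ) 0) := isCompact_iff_compactSpace.mp isCompact_Icc
    set prIcc : C(ℝ, Set.Icc (-d : ℝ) 0) := ⟨Set.projIcc (-d) 0 hd0, continuous_projIcc⟩
      with hprIcc
    set ι := BoundedContinuousFunction.toLp (E := EuclideanSpace ℝ (Fin n)) 2 ν ℝ with hι
    set M := (1 + μ * d) * (1 + Ca) * Real.sqrt d with hM
    set CH := (1 + μ * d) * (1 + Ca) with hCH
    have hCH0 : (0:ℝ) ≤ CH := by rw [hCH]; nlinarith [mul_pos hμpos hd]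
    set B1 := KN * (1 + Real.sqrt d) with hB1
    set A : Set (BoundedContinuousFunction (Set.Icc (-d : ℝ) 0) (EuclideanSpace ℝ (Fin n))) :=
      {f | (∀ x, f x ∈ Metric.closedBall (0 : EuclideanSpace ℝ (Fin n)) M)
        ∧ ∀ x y, dist (f x) (f y) ≤ CH * Real.sqrt (dist x y)} with hA
    have hAcl : IsCompact (closure A) := by
      refine BoundedContinuousFunction.arzela_ascoli
        (Metric.closedBall 0 M) (isCompact_closedBall _ _) A (fun f x hf => hf.1 x) ?_
      intro x₀
      rw [Metric.equicontinuousAt_iff]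
      intro ε hε
      obtain ⟨δ, hδ, hδ'⟩ := mod_aux hCH0 hε
      refine ⟨δ, hδ, fun x hx f => ?_⟩
      refine lt_of_le_of_lt (f.2.2 x₀ x) ?_
      rw [dist_comm x₀ x]
      exact hδ' _ dist_nonneg hx
    have hlip : LipschitzWith 1
        (fun f : BoundedContinuousFunction (Set.Icc (-d : ℝ) 0) (EuclideanSpace ℝ (Fin n)) =>
          f.compContinuous prIcc) := by
      refine LipschitzWith.of_dist_le_mul fun f g => ?_
      rw [NNReal.coe_one, one_mul]
      refine (BoundedContinuousFunction.dist_le dist_nonneg).mpr fun x => ?_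
      simp only [BoundedContinuousFunction.compContinuous_apply]
      exact BoundedContinuousFunction.dist_coe_le_dist _
    set Θ : EuclideanSpace ℝ (Fin n)
        × (BoundedContinuousFunction (Set.Icc (-d : ℝ) 0) (EuclideanSpace ℝ (Fin n))) → XSp n d :=
      fun p => (WithLp.prodContinuousLinearEquiv 2 ℝ _ _).symm (p.1, ι (p.2.compContinuous prIcc))
      with hΘ
    have hΘc : Continuous Θ := by
      refine ((WithLp.prodContinuousLinearEquiv 2 ℝ _ _).symm.continuous).comp ?_
      exact continuous_fst.prodMk (ι.continuous.comp (hlip.continuous.comp continuous_snd))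
    have hKc : IsCompact (Θ '' (Metric.closedBall 0 B1 ×ˢ closure A)) :=
      ((isCompact_closedBall _ _).prod hAcl).image hΘc
    refine ⟨Θ '' (Metric.closedBall 0 B1 ×ˢ closure A), hKc, ?_⟩
    refine Filter.mem_of_superset (Metric.closedBall_mem_nhds 0 one_pos) ?_
    intro z hz
    rw [Metric.mem_closedBall, dist_zero_right] at hz
    have hgz := hgmem z
    set u : ℝ → EuclideanSpace ℝ (Fin n) := fun ξ => ∫ r in (-d)..ξ,
      Real.exp (-μ * (ξ - r)) • (-((WithLp.equiv 2 _ z).2 r) + a₁ r ((WithLp.equiv 2 _ z).1))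
      with hu
    set NG := (eLpNorm
        (fun r => -((WithLp.equiv 2 _ z).2 r) + a₁ r ((WithLp.equiv 2 _ z).1)) 2 ν).toReal
      with hNGz
    have hNG0 : 0 ≤ NG := ENNReal.toReal_nonneg
    have hNG1 : NG ≤ 1 + Ca := by
      refine (hNG z).trans ?_
      nlinarith
    have hmod : ∀ x y : Set.Icc (-d : ℝ) 0,
        dist (u x) (u y) ≤ ((1 + μ * d) * NG) * Real.sqrt (dist (x : ℝ) (y : ℝ)) := by
      intro x y
      rw [dist_eq_norm, Real.dist_eq]
      rcases le_total (y : ℝ) (x : ℝ) with hxy | hxy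
      · rw [abs_of_nonneg (by linarith)]
        exact holder_bound hd hμpos hgz x.2 y.2 hxy
      · rw [abs_of_nonpos (by linarith), norm_sub_rev, neg_sub]
        exact holder_bound hd hμpos hgz y.2 x.2 hxy
    have hmod' : ∀ x y : Set.Icc (-d : ℝ) 0,
        dist (u x) (u y) ≤ ((1 + μ * d) * NG) * Real.sqrt (dist x y) := by
      intro x y
      have := hmod x y
      rwa [← Subtype.dist_eq] at this
    have hone : (0:ℝ) ≤ (1 + μ * d) * NG := mul_nonneg (by nlinarith [mul_pos hμpos hd]) hNG0
    have hcont : Continuous (fun x : Set.Icc (-d : ℝ) 0 => u (x : ℝ)) :=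
      continuous_of_sqrt_mod hone hmod'
    have hubd : ∀ x : Set.Icc (-d : ℝ) 0, ‖u (x : ℝ)‖ ≤ (1 + μ * d) * NG * Real.sqrt d :=
      fun x => sup_bound hd hμpos hgz x.2
    set fz : BoundedContinuousFunction (Set.Icc (-d : ℝ) 0) (EuclideanSpace ℝ (Fin n)) :=
      BoundedContinuousFunction.ofNormedAddCommGroup _ hcont _ hubd with hfz
    have hfzcoe : ∀ x : Set.Icc (-d : ℝ) 0, fz x = u (x : ℝ) := fun x => rfl
    have hfzA : fz ∈ A := by
      constructor
      · intro x
        rw [mem_closedBall_zero_iff, hfzcoe x]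
        refine (hubd x).trans ?_
        rw [hM]
        refine mul_le_mul_of_nonneg_right ?_ (Real.sqrt_nonneg d)
        exact mul_le_mul_of_nonneg_left hNG1 (by nlinarith [mul_pos hμpos hd])
      · intro x y
        rw [hfzcoe x, hfzcoe y]
        refine (hmod' x y).trans ?_
        refine mul_le_mul_of_nonneg_right ?_ (Real.sqrt_nonneg _)
        rw [hCH]
        exact mul_le_mul_of_nonneg_left hNG1 (by nlinarith [mul_pos hμpos hd])
    have hv : (WithLp.equiv 2 _ (T z)).1 ∈
        Metric.closedBall (0 : EuclideanSpace ℝ (Fin n)) B1 := by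
      rw [mem_closedBall_zero_iff]
      refine (hb1 z).trans ?_
      rw [hB1]
      have h1 : (0:ℝ) ≤ 1 + Real.sqrt d := by positivity
      have h2 : (1 + Real.sqrt d) * ‖z‖ ≤ (1 + Real.sqrt d) * 1 := mul_le_mul_of_nonneg_left hz h1
      have h3 := mul_le_mul_of_nonneg_left h2 hKN0
      rw [mul_one] at h3
      exact h3
    have hTz : T z = Θ ((WithLp.equiv 2 _ (T z)).1, fz) := by
      rw [hΘ]
      symm
      rw [ContinuousLinearEquiv.symm_apply_eq]
      have hce : (WithLp.prodContinuousLinearEquiv 2 ℝ _ _) (T z)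
          = WithLp.equiv 2 _ (T z) := rfl
      rw [hce]
      refine Prod.ext rfl ?_
      apply Lp.ext
      have h1 := BoundedContinuousFunction.coeFn_toLp 2 ν ℝ (fz.compContinuous prIcc)
      filter_upwards [h1, hT₂ z, ae_restrict_mem measurableSet_Icc] with ξ hξ1 hξ2 hξ3
      calc (ι (fz.compContinuous prIcc) : ℝ → EuclideanSpace ℝ (Fin n)) ξ
          = (fz.compContinuous prIcc) ξ := hξ1
        _ = fz (prIcc ξ) := BoundedContinuousFunction.compContinuous_apply _ _ _
        _ = fz (Set.projIcc (-d) 0 hd0 ξ) := rfl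
        _ = fz ⟨ξ, hξ3⟩ := by rw [Set.projIcc_of_mem hd0 hξ3]
        _ = u ξ := hfzcoe _
        _ = (WithLp.equiv 2 _ (T z)).2 ξ := hξ2.symm
    exact ⟨((WithLp.equiv 2 _ (T z)).1, fz),
      Set.mem_prod.mpr ⟨hv, subset_closure hfzA⟩, hTz.symm⟩
end
end

section
/- For every R > 0 there exists a nondecreasing function ω̃_R : [0,∞) → [0,∞) with ω̃_R(s) → 0 as s → 0⁺ such that |l(x₀,u) − l(y₀,u)| ≤ ω̃_R(|T(x−y)|_X) for all x=(x₀,x₁), y=(y₀,y₁) ∈ X with |x|_X ≤ R and |y|_X ≤ R, and all u ∈ U. -/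
open MeasureTheory RealInnerProductSpace
noncomputable section

lemma XSp.norm_fst_le {n : ℕ} {d : ℝ} (x : XSp n d) : ‖x.fst‖ ≤ ‖x‖ := by
  have := WithLp.prod_norm_sq_eq_of_L2 x
  nlinarith [norm_nonneg x, norm_nonneg x.fst, norm_nonneg x.snd, sq_nonneg ‖x.snd‖]

/-- Dense range of the adjoint of an injective operator on a Hilbert space. -/
lemma adjoint_denseRange {E : Type*} [NormedAddCommGroup E] [InnerProductSpace ℝ E]
    [CompleteSpace E] (T : E →L[ℝ] E) (hTinj : Function.Injective T)
    (v : E) {η : ℝ} (hη : 0 < η) :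
    ∃ w : E, ‖ContinuousLinearMap.adjoint T w - v‖ < η := by
  set K : Submodule ℝ E := LinearMap.range (ContinuousLinearMap.adjoint T : E →ₗ[ℝ] E) with hK
  have horth : Kᗮ = ⊥ := by
    rw [Submodule.eq_bot_iff]
    intro x hx
    have h1 : ⟪ContinuousLinearMap.adjoint T (T x), x⟫ = 0 :=
      hx (ContinuousLinearMap.adjoint T (T x)) ⟨T x, rfl⟩
    rw [ContinuousLinearMap.adjoint_inner_left] at h1
    have h2 : T x = 0 := inner_self_eq_zero.mp h1
    have : T x = T 0 := by rw [h2, map_zero]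
    exact hTinj this
  have hcl : K.topologicalClosure = ⊤ := by
    rw [← Submodule.orthogonal_orthogonal_eq_closure, horth,
      Submodule.bot_orthogonal_eq_top]
  have hv : v ∈ closure (K : Set E) := by
    have : v ∈ K.topologicalClosure := by rw [hcl]; trivial
    exact this
  rw [Metric.mem_closure_iff] at hv
  obtain ⟨w', hw'mem, hw'⟩ := hv η hη
  obtain ⟨w, rfl⟩ := hw'mem
  exact ⟨w, by rwa [← dist_eq_norm, dist_comm]⟩

/-- If l has a local modulus of continuity in its first variable, uniform in
u ∈ U, and T : X → X is an injective compact bounded linear operator, then for every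
R > 0 there is a modulus ω̃_R with |l(x₀,u) − l(y₀,u)| ≤ ω̃_R(‖T(x−y)‖) whenever
‖x‖_X, ‖y‖_X ≤ R. -/
theorem running_cost_modulus_in_weak_norm
    (n : ℕ) (hn : 1 ≤ n) (d : ℝ) (hd : 0 < d)
    (U : Type*) [Nonempty U]
    (l : EuclideanSpace ℝ (Fin n) → U → ℝ)
    (hl : ∀ R > (0:ℝ), ∃ ω : ℝ → ℝ, Monotone ω ∧ (∀ s, 0 ≤ ω s)
      ∧ Filter.Tendsto ω (nhdsWithin 0 (Set.Ioi 0)) (nhds 0)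
      ∧ ∀ (z z' : EuclideanSpace ℝ (Fin n)) (u : U),
          ‖z‖ ≤ R → ‖z'‖ ≤ R → |l z u - l z' u| ≤ ω ‖z - z'‖)
    (T : XSp n d →L[ℝ] XSp n d)
    (hTinj : Function.Injective T)
    (hTcompact : IsCompactOperator T) :
    ∀ R > (0:ℝ), ∃ ω : ℝ → ℝ, Monotone ω ∧ (∀ s, 0 ≤ ω s)
      ∧ Filter.Tendsto ω (nhdsWithin 0 (Set.Ioi 0)) (nhds 0)
      ∧ ∀ (x y : XSp n d) (u : U), ‖x‖ ≤ R → ‖y‖ ≤ R →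
          |l (WithLp.equiv 2 _ x).1 u - l (WithLp.equiv 2 _ y).1 u| ≤ ω ‖T (x - y)‖ := by
  intro R hR
  obtain ⟨ω, hmono, hnonneg, htend, hmod⟩ := hl R hR
  classical
  -- Key quantitative lemma: small ‖T z‖ (for bounded z) forces small first component.
  have key : ∀ ε > (0:ℝ), ∃ δ > (0:ℝ), ∀ z : XSp n d, ‖z‖ ≤ 2*R → ‖T z‖ ≤ δ →
      ‖z.fst‖ ≤ ε := by
    intro ε hε
    have hnpos : (0:ℝ) < n := by exact_mod_cast Nat.lt_of_lt_of_le Nat.zero_lt_one hn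
    set η : ℝ := ε / (2 * n * (2*R+1)) with hηdef
    have hηpos : 0 < η := by positivity
    have hchoice : ∀ i : Fin n, ∃ w : XSp n d,
        ‖ContinuousLinearMap.adjoint T w -
          ((WithLp.equiv 2 _).symm (EuclideanSpace.single i (1:ℝ), 0))‖ < η :=
      fun i => adjoint_denseRange T hTinj _ hηpos
    choose w hw using hchoice
    set C : ℝ := ∑ i : Fin n, ‖w i‖ with hC
    have hCnn : 0 ≤ C := Finset.sum_nonneg fun i _ => norm_nonneg _
    have hwC : ∀ i : Fin n, ‖w i‖ ≤ C :=
      fun i => Finset.single_le_sum (f := fun i => ‖w i‖)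
        (fun j _ => norm_nonneg _) (Finset.mem_univ i)
    set δ : ℝ := ε / (2 * n * (C+1)) with hδdef
    have hδpos : 0 < δ := by positivity
    refine ⟨δ, hδpos, fun z hz hTz => ?_⟩
    -- coordinatewise bound
    have hcoord : ∀ i : Fin n, |z.fst i| ≤ 2*R*η + C*δ := by
      intro i
      set Ei : XSp n d := (WithLp.equiv 2 _).symm (EuclideanSpace.single i (1:ℝ), 0) with hEi
      have hinner : ⟪z, Ei⟫ = z.fst i := by
        have : ⟪z, Ei⟫ = ⟪z.fst, EuclideanSpace.single i (1:ℝ)⟫ + ⟪z.snd, (0 : Lp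
            (EuclideanSpace ℝ (Fin n)) 2 (volume.restrict (Set.Icc (-d) 0)))⟫ := rfl
        rw [this, inner_zero_right, EuclideanSpace.inner_single_right]
        simp
      have hsplit : ⟪z, Ei⟫ = ⟪z, Ei - ContinuousLinearMap.adjoint T (w i)⟫ +
          ⟪T z, w i⟫ := by
        rw [← ContinuousLinearMap.adjoint_inner_right, ← inner_add_right]
        congr 1
        abel
      have h1 : |⟪z, Ei - ContinuousLinearMap.adjoint T (w i)⟫| ≤ (2*R) * η := by
        refine (abs_real_inner_le_norm _ _).trans ?_
        have h2 : ‖Ei - ContinuousLinearMap.adjoint T (w i)‖ ≤ η := by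
          rw [← neg_sub, norm_neg]
          exact (hw i).le
        exact mul_le_mul hz h2 (norm_nonneg _) (by positivity)
      have h3 : |⟪T z, w i⟫| ≤ C * δ := by
        refine (abs_real_inner_le_norm _ _).trans ?_
        calc ‖T z‖ * ‖w i‖ ≤ δ * C :=
              mul_le_mul hTz (hwC i) (norm_nonneg _) hδpos.le
          _ = C * δ := mul_comm _ _
      calc |z.fst i| = |⟪z, Ei - ContinuousLinearMap.adjoint T (w i)⟫ + ⟪T z, w i⟫| := by
            rw [← hsplit, hinner]
        _ ≤ |⟪z, Ei - ContinuousLinearMap.adjoint T (w i)⟫| + |⟪T z, w i⟫| := abs_add_le _ _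
        _ ≤ 2*R*η + C*δ := add_le_add h1 h3
    -- from coordinates to the norm
    have hb : (0:ℝ) ≤ 2*R*η + C*δ := by positivity
    have hnorm1 : ‖z.fst‖ ≤ ∑ i : Fin n, |z.fst i| := by
      have hsq : ‖z.fst‖^2 ≤ (∑ i : Fin n, |z.fst i|)^2 := by
        rw [EuclideanSpace.norm_eq]
        rw [Real.sq_sqrt (by positivity)]
        have : ∀ i : Fin n, ‖z.fst i‖^2 = |z.fst i|^2 := fun i => by
          rw [Real.norm_eq_abs]
        simp_rw [this]
        exact Finset.sum_sq_le_sq_sum_of_nonneg (fun i _ => abs_nonneg _)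
      have hsum_nn : (0:ℝ) ≤ ∑ i : Fin n, |z.fst i| :=
        Finset.sum_nonneg fun i _ => abs_nonneg _
      nlinarith [norm_nonneg z.fst]
    have hnorm2 : ‖z.fst‖ ≤ n * (2*R*η + C*δ) := by
      refine hnorm1.trans ?_
      calc (∑ i : Fin n, |z.fst i|) ≤ ∑ _i : Fin n, (2*R*η + C*δ) :=
            Finset.sum_le_sum fun i _ => hcoord i
        _ = n * (2*R*η + C*δ) := by
            rw [Finset.sum_const, Finset.card_univ, Fintype.card_fin, nsmul_eq_mul]
    refine hnorm2.trans ?_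
    have hηval : η * (2 * n * (2*R+1)) = ε := by
      rw [hηdef]; field_simp
    have hδval : δ * (2 * n * (C+1)) = ε := by
      rw [hδdef]; field_simp
    nlinarith [mul_pos hnpos hηpos, mul_pos hnpos hδpos, hR.le, hCnn,
      mul_nonneg (mul_nonneg hnpos.le hηpos.le) hR.le]
  -- modulus for l at radius R (in ℝⁿ), note ‖x.fst‖ ≤ ‖x‖.
  set S : ℝ → Set ℝ := fun s => {t | ∃ x y : XSp n d, ∃ u : U, ‖x‖ ≤ R ∧ ‖y‖ ≤ R ∧
    ‖T (x - y)‖ ≤ s ∧ t = |l x.fst u - l y.fst u|} with hSdef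
  have hub : ∀ s : ℝ, ∀ t ∈ S s, t ≤ ω (2*R) := by
    rintro s t ⟨x, y, u, hx, hy, -, rfl⟩
    refine (hmod x.fst y.fst u ((XSp.norm_fst_le x).trans hx)
      ((XSp.norm_fst_le y).trans hy)).trans (hmono ?_)
    calc ‖x.fst - y.fst‖ ≤ ‖x.fst‖ + ‖y.fst‖ := norm_sub_le _ _
      _ ≤ R + R := add_le_add ((XSp.norm_fst_le x).trans hx) ((XSp.norm_fst_le y).trans hy)
      _ = 2*R := by ring
  have hbdd : ∀ s : ℝ, BddAbove (S s) := fun s => ⟨ω (2*R), fun t ht => hub s t ht⟩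
  have hmemnn : ∀ s : ℝ, ∀ t ∈ S s, (0:ℝ) ≤ t := by
    rintro s t ⟨x, y, u, -, -, -, rfl⟩; exact abs_nonneg _
  set g : ℝ → ℝ := fun s => sSup (S s) with hgdef
  have hgnn : ∀ s, 0 ≤ g s := fun s => Real.sSup_nonneg (hmemnn s)
  refine ⟨g, ?_, hgnn, ?_, ?_⟩
  · -- monotone
    intro s s' hss'
    refine Real.sSup_le (fun t ht => ?_) (hgnn s')
    refine le_csSup (hbdd s') ?_
    obtain ⟨x, y, u, hx, hy, hts, rfl⟩ := ht
    exact ⟨x, y, u, hx, hy, hts.trans hss', rfl⟩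
  · -- tendsto
    rw [Metric.tendsto_nhdsWithin_nhds]
    rw [Metric.tendsto_nhdsWithin_nhds] at htend
    intro ε hε
    obtain ⟨η₀, hη₀, hη₀'⟩ := htend ε hε
    set η : ℝ := η₀/2 with hηdef
    have hηpos : 0 < η := by positivity
    have hωη : ω η < ε := by
      have := hη₀' (Set.mem_Ioi.mpr hηpos) (by
        rw [Real.dist_eq, sub_zero, abs_of_pos hηpos]
        simpa [hηdef] using half_lt_self hη₀)
      rw [Real.dist_eq, sub_zero, abs_of_nonneg (hnonneg η)] at this
      exact this
    obtain ⟨δ, hδpos, hδ⟩ := key η hηpos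
    refine ⟨δ, hδpos, fun {s} hs hsd => ?_⟩
    rw [Real.dist_eq, sub_zero, abs_of_nonneg (hgnn s)]
    have hgs : g s ≤ ω η := by
      refine Real.sSup_le (fun t ht => ?_) (hnonneg η)
      obtain ⟨x, y, u, hx, hy, hts, rfl⟩ := ht
      have hz : ‖x - y‖ ≤ 2*R := by
        calc ‖x - y‖ ≤ ‖x‖ + ‖y‖ := norm_sub_le _ _
          _ ≤ R + R := add_le_add hx hy
          _ = 2*R := by ring
      have hTz : ‖T (x - y)‖ ≤ δ := by
        refine hts.trans ?_
        rw [Real.dist_eq, sub_zero] at hsd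
        exact le_of_lt (lt_of_le_of_lt (le_abs_self s) hsd)
      have hfst : ‖(x - y).fst‖ ≤ η := hδ (x - y) hz hTz
      have hfst' : ‖x.fst - y.fst‖ ≤ η := hfst
      exact (hmod x.fst y.fst u ((XSp.norm_fst_le x).trans hx)
        ((XSp.norm_fst_le y).trans hy)).trans (hmono hfst')
    exact lt_of_le_of_lt hgs hωη
  · -- the inequality
    intro x y u hx hy
    exact le_csSup (hbdd _) ⟨x, y, u, hx, hy, le_refl _, rfl⟩
end
end

section
/- There is no constant C > 0 such that |x₀| ≤ C |T_μ x|_X for every x = (x₀,x₁) ∈ X with |x|_X ≤ 1. In fact, the vectors x^N := (1, −N·1_{[-1/N,0]}) ∈ X (for integers N > 1/d) satisfy x₀^N = 1 while |T_μ x^N|_X → 0 as N → ∞, and normalizing x^N shows the failure of the inequality on the unit ball. -/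
open MeasureTheory
noncomputable section

/-- The indicator function `−N·1_{[-1/N,0]}`. -/
def ind (N : ℕ) : ℝ → ℝ := Set.indicator (Set.Icc (-(1/(N:ℝ))) 0) (fun _ => -(N:ℝ))

/-- The explicit value of the second component of `T_μ x^N`. -/
def g (μ : ℝ) (N : ℕ) (ξ : ℝ) : ℝ :=
  (N:ℝ)/μ * max (1 - Real.exp (-(μ*(ξ+1/N)))) 0

theorem exp_int (μ a b : ℝ) (hμ : 0 < μ) :
    ∫ r in a..b, Real.exp (μ*r) = (Real.exp (μ*b) - Real.exp (μ*a))/μ := by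
  have : ∀ x : ℝ, HasDerivAt (fun y => Real.exp (μ*y)/μ) (Real.exp (μ*x)) x := by
    intro x
    have h1 : HasDerivAt (fun y : ℝ => μ*y) μ x := by
      simpa using (hasDerivAt_id x).const_mul μ
    have h2 := ((Real.hasDerivAt_exp (μ*x)).comp x h1).div_const μ
    have hne : μ ≠ 0 := ne_of_gt hμ
    simpa [Function.comp, mul_comm, mul_div_assoc, mul_div_cancel_left₀ _ hne] using h2
  rw [intervalIntegral.integral_eq_sub_of_hasDerivAt (fun x _ => this x)
    ((Real.continuous_exp.comp (continuous_const.mul continuous_id)).intervalIntegrable a b)]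
  ring

theorem exp_int_Icc (μ a b : ℝ) (hμ : 0 < μ) (h : a ≤ b) :
    ∫ r in Set.Icc a b, Real.exp (μ*r) = (Real.exp (μ*b) - Real.exp (μ*a))/μ := by
  rw [MeasureTheory.integral_Icc_eq_integral_Ioc, ← intervalIntegral.integral_of_le h,
    exp_int μ a b hμ]

theorem ind_mul (N : ℕ) (f : ℝ → ℝ) :
    (fun r => f r * ind N r)
      = Set.indicator (Set.Icc (-(1/(N:ℝ))) 0) (fun r => f r * (-(N:ℝ))) := by
  funext r
  by_cases h : r ∈ Set.Icc (-(1/(N:ℝ))) 0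
  · rw [ind, Set.indicator_of_mem h, Set.indicator_of_mem h]
  · rw [ind, Set.indicator_of_notMem h, Set.indicator_of_notMem h, mul_zero]

theorem ind_int_pos (μ : ℝ) (N : ℕ) (hμ : 0 < μ) (a b : ℝ)
    (ha : a < -(1/(N:ℝ))) (hb : -(1/(N:ℝ)) ≤ b) (hb0 : b ≤ 0) :
    ∫ r in Set.Ioc a b, Real.exp (μ*r) * ind N r
      = -(N:ℝ) * (Real.exp (μ*b) - Real.exp (-(μ/N)))/μ := by
  rw [ind_mul, MeasureTheory.setIntegral_indicator measurableSet_Icc]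
  have hset : Set.Ioc a b ∩ Set.Icc (-(1/(N:ℝ))) 0 = Set.Icc (-(1/(N:ℝ))) b := by
    ext x
    simp only [Set.mem_inter_iff, Set.mem_Ioc, Set.mem_Icc]
    constructor
    · rintro ⟨⟨_, h2⟩, h3, _⟩; exact ⟨h3, h2⟩
    · rintro ⟨h1, h2⟩; exact ⟨⟨lt_of_lt_of_le ha h1, h2⟩, h1, le_trans h2 hb0⟩
  rw [hset, MeasureTheory.integral_mul_const, exp_int_Icc μ _ _ hμ hb]
  have : μ * -(1/(N:ℝ)) = -(μ/N) := by ring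
  rw [this]; ring

theorem ind_int_zero (μ : ℝ) (N : ℕ) (a b : ℝ)
    (ha : a < -(1/(N:ℝ))) (hb : b ≤ -(1/(N:ℝ))) :
    ∫ r in Set.Ioc a b, Real.exp (μ*r) * ind N r = 0 := by
  rw [ind_mul, MeasureTheory.setIntegral_indicator measurableSet_Icc]
  have hset : Set.Ioc a b ∩ Set.Icc (-(1/(N:ℝ))) 0 ⊆ Set.Icc (-(1/(N:ℝ))) b := by
    rintro x ⟨⟨_, h2⟩, h3, _⟩; exact ⟨h3, h2⟩
  have hz : volume (Set.Ioc a b ∩ Set.Icc (-(1/(N:ℝ))) 0) = 0 := by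
    refine measure_mono_null hset ?_
    rw [Real.volume_Icc]
    rw [ENNReal.ofReal_eq_zero]
    linarith
  rw [MeasureTheory.Measure.restrict_eq_zero.mpr hz, MeasureTheory.integral_zero_measure]

theorem Tsnd_val (d μ : ℝ) (hμ : 0 < μ) (N : ℕ) (hN : 0 < N) (hNd : 1/(N:ℝ) < d)
    (ξ : ℝ) (h1 : -d ≤ ξ) (h2 : ξ ≤ 0) :
    -(∫ r in (-d)..ξ, Real.exp (-μ*(ξ-r)) * ind N r) = g μ N ξ := by
  have hNpos : (0:ℝ) < N := by exact_mod_cast hN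
  have hrw : (fun r => Real.exp (-μ*(ξ-r)) * ind N r)
      = fun r => Real.exp (-(μ*ξ)) * (Real.exp (μ*r) * ind N r) := by
    funext r
    rw [← mul_assoc, ← Real.exp_add]
    ring_nf
  rw [g, hrw, intervalIntegral.integral_const_mul, intervalIntegral.integral_of_le h1]
  have had : -d < -(1/(N:ℝ)) := by linarith
  rcases le_or_gt (-(1/(N:ℝ))) ξ with hc | hc
  · rw [ind_int_pos μ N hμ _ _ had hc h2]
    have hmax : max (1 - Real.exp (-(μ*(ξ+1/N)))) 0 = 1 - Real.exp (-(μ*(ξ+1/N))) := by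
      apply max_eq_left
      have : -(μ*(ξ+1/N)) ≤ 0 := by
        have : 0 ≤ ξ + 1/(N:ℝ) := by linarith
        nlinarith
      nlinarith [Real.exp_le_one_iff.mpr this]
    rw [hmax]
    have hE : Real.exp (-(μ*(ξ+1/N))) = Real.exp (-(μ*ξ)) * Real.exp (-(μ/N)) := by
      rw [← Real.exp_add]; ring_nf
    have hE2 : Real.exp (-(μ*ξ)) * Real.exp (μ*ξ) = 1 := by
      rw [← Real.exp_add]; simp
    rw [hE]
    set A := Real.exp (-(μ*ξ)) with hA
    set B := Real.exp (μ*ξ) with hB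
    set C := Real.exp (-(μ/N)) with hC
    have hμne : μ ≠ 0 := ne_of_gt hμ
    field_simp
    linear_combination hE2
  · rw [ind_int_zero μ N _ _ had (le_of_lt hc), mul_zero, neg_zero]
    have hmax : max (1 - Real.exp (-(μ*(ξ+1/N)))) 0 = 0 := by
      apply max_eq_right
      have h3 : 0 ≤ -(μ*(ξ+1/N)) := by nlinarith
      nlinarith [Real.one_le_exp h3]
    rw [hmax, mul_zero]

theorem Tfst_bound (μ : ℝ) (hμ : 0 < μ) (N : ℕ) (hN : 0 < N) :
    |(-(μ⁻¹ * (1 + -(N:ℝ) * (1 - Real.exp (-(μ/N)))/μ)))| ≤ 1/N := by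
  have hNpos : (0:ℝ) < N := by exact_mod_cast hN
  have hμne : μ ≠ 0 := ne_of_gt hμ
  have hNne : (N:ℝ) ≠ 0 := ne_of_gt hNpos
  set E := Real.exp (-(μ/N)) with hE
  set t := μ/(N:ℝ) with hta
  have ht : 0 < t := by positivity
  have h1 : 1 - t ≤ E := by
    have := Real.add_one_le_exp (-(μ/N)); rw [← hE] at this; linarith
  have h2 : E * (1 + t) ≤ 1 := by
    have ha := Real.add_one_le_exp (μ/N)
    have hb : E * Real.exp (μ/N) = 1 := by rw [hE, ← Real.exp_add]; simp [hta]
    have hEpos : 0 < E := Real.exp_pos _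
    nlinarith
  have hup : E ≤ 1 - t + t^2 := by nlinarith
  have hkey : -(N:ℝ) * (1 - E)/μ = -((1-E)/t) := by
    rw [hta]; field_simp
  rw [hkey]
  have ha' : (1-E)/t ≤ 1 := by rw [div_le_one ht]; linarith
  have hb' : 1 - t ≤ (1-E)/t := by rw [le_div_iff₀ ht]; nlinarith
  have hv0 : 0 ≤ 1 + -((1-E)/t) := by linarith
  have hvt : 1 + -((1-E)/t) ≤ t := by linarith
  rw [abs_neg, abs_of_nonneg (by positivity)]
  calc μ⁻¹ * (1 + -((1-E)/t)) ≤ μ⁻¹ * t := by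
        apply mul_le_mul_of_nonneg_left hvt (by positivity)
    _ = 1/N := by rw [hta]; field_simp

theorem g_cont (μ : ℝ) (N : ℕ) : Continuous (g μ N) := by
  unfold g; fun_prop

theorem g_sq_bound (μ : ℝ) (hμ : 0 < μ) (N : ℕ) (hN : 0 < N) (ξ : ℝ) (hξ2 : ξ ≤ 0) :
    (g μ N ξ)^2 ≤ Set.indicator (Set.Icc (-(1/(N:ℝ))) 0) (fun _ => (1:ℝ)) ξ := by
  have hNpos : (0:ℝ) < N := by exact_mod_cast hN
  by_cases h : ξ ∈ Set.Icc (-(1/(N:ℝ))) 0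
  · rw [Set.indicator_of_mem h]
    obtain ⟨hl, hr⟩ := h
    have hg0 : 0 ≤ g μ N ξ := by unfold g; positivity
    have hg1 : g μ N ξ ≤ 1 := by
      unfold g
      rcases le_or_gt (1 - Real.exp (-(μ*(ξ+1/N)))) 0 with hc | hc
      · rw [max_eq_right hc]; simp
      · rw [max_eq_left (le_of_lt hc)]
        have hs : 0 ≤ μ*(ξ+1/(N:ℝ)) := by
          have : 0 ≤ ξ + 1/(N:ℝ) := by linarith
          positivity
        have hexp : 1 - μ*(ξ+1/(N:ℝ)) ≤ Real.exp (-(μ*(ξ+1/N))) := by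
          have := Real.add_one_le_exp (-(μ*(ξ+1/(N:ℝ)))); linarith
        have h1 : 1 - Real.exp (-(μ*(ξ+1/N))) ≤ μ*(ξ+1/(N:ℝ)) := by linarith
        have h2 : (N:ℝ)/μ * (μ*(ξ+1/(N:ℝ))) ≤ 1 := by
          have : (N:ℝ)/μ * (μ*(ξ+1/(N:ℝ))) = (N:ℝ)*(ξ+1/(N:ℝ)) := by
            field_simp
          rw [this]
          have : (N:ℝ)*(ξ+1/(N:ℝ)) = (N:ℝ)*ξ + 1 := by field_simp
          nlinarith
        calc (N:ℝ)/μ * (1 - Real.exp (-(μ*(ξ+1/N)))) ≤ (N:ℝ)/μ * (μ*(ξ+1/(N:ℝ))) := by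
              apply mul_le_mul_of_nonneg_left h1 (by positivity)
          _ ≤ 1 := h2
    nlinarith
  · rw [Set.indicator_of_notMem h]
    have hl : ξ < -(1/(N:ℝ)) := by
      by_contra hcon
      push_neg at hcon
      exact h ⟨hcon, hξ2⟩
    have : g μ N ξ = 0 := by
      unfold g
      rw [max_eq_right, mul_zero]
      have h3 : 0 ≤ -(μ*(ξ+1/N)) := by nlinarith
      nlinarith [Real.one_le_exp h3]
    rw [this]; norm_num

theorem Icc_inter (d : ℝ) (N : ℕ) (hNd : 1/(N:ℝ) < d) :
    Set.Icc (-d) 0 ∩ Set.Icc (-(1/(N:ℝ))) 0 = Set.Icc (-(1/(N:ℝ))) 0 := by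
  rw [Set.Icc_inter_Icc]
  have h1 : -d ⊔ -(1/(N:ℝ)) = -(1/(N:ℝ)) := max_eq_right (by linarith)
  rw [h1, min_self]

theorem g_int_bound (d μ : ℝ) (hμ : 0 < μ) (N : ℕ) (hN : 0 < N)
    (hNd : 1/(N:ℝ) < d) :
    ∫ ξ in Set.Icc (-d) 0, (g μ N ξ)^2 ≤ 1/N := by
  have hNpos : (0:ℝ) < N := by exact_mod_cast hN
  have hint1 : IntegrableOn (fun ξ => (g μ N ξ)^2) (Set.Icc (-d) 0) volume :=
    ((g_cont μ N).pow 2).integrableOn_Icc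
  have hint2 : IntegrableOn
      (Set.indicator (Set.Icc (-(1/(N:ℝ))) 0) (fun _ => (1:ℝ))) (Set.Icc (-d) 0) volume := by
    refine Integrable.indicator ?_ measurableSet_Icc
    exact integrableOn_const (by rw [Real.volume_Icc]; exact ENNReal.ofReal_ne_top)
  calc ∫ ξ in Set.Icc (-d) 0, (g μ N ξ)^2
      ≤ ∫ ξ in Set.Icc (-d) 0, Set.indicator (Set.Icc (-(1/(N:ℝ))) 0) (fun _ => (1:ℝ)) ξ :=
        setIntegral_mono_on hint1 hint2 measurableSet_Icc
          (fun ξ hξ => g_sq_bound μ hμ N hN ξ hξ.2)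
    _ = 1/N := by
        rw [MeasureTheory.setIntegral_indicator measurableSet_Icc, Icc_inter d N hNd,
          MeasureTheory.setIntegral_const, smul_eq_mul, mul_one, measureReal_def, Real.volume_Icc]
        rw [ENNReal.toReal_ofReal (by rw [zero_sub, neg_neg]; positivity)]
        ring

/-- (scalar case n = 1, a₀ = 0, a₁ = 0, μ > 1) There is no constant C > 0
with |x₀| ≤ C|T_μ x|_X for all x = (x₀,x₁) in the unit ball of X = ℝ × L²([-d,0];ℝ);
indeed the vectors x^N = (1, −N·1_{[-1/N,0]}) satisfy x₀^N = 1 while |T_μ x^N|_X → 0. -/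
theorem no_first_component_bound_by_Tmu
    (d : ℝ) (hd : 0 < d) (μ : ℝ) (hμ : 1 < μ)
    -- first component of T_μ z
    (Tfst : ℝ → (ℝ → ℝ) → ℝ)
    (hTfst : ∀ z₀ z₁, Tfst z₀ z₁
      = -(μ⁻¹ * (z₀ + ∫ r in Set.Icc (-d) 0, Real.exp (μ * r) * z₁ r)))
    -- second component of T_μ z
    (Tsnd : (ℝ → ℝ) → ℝ → ℝ)
    (hTsnd : ∀ z₁ ξ, Tsnd z₁ ξ = -(∫ r in (-d)..ξ, Real.exp (-μ * (ξ - r)) * z₁ r))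
    -- |T_μ z|_X
    (normT : ℝ → (ℝ → ℝ) → ℝ)
    (hnormT : ∀ z₀ z₁, normT z₀ z₁
      = Real.sqrt ((Tfst z₀ z₁)^2 + ∫ ξ in Set.Icc (-d) 0, (Tsnd z₁ ξ)^2))
    -- the vectors x^N = (1, −N·1_{[-1/N,0]})
    (xN : ℕ → ℝ → ℝ)
    (hxN : ∀ (N : ℕ) (ξ : ℝ),
      xN N ξ = Set.indicator (Set.Icc (-(1/(N:ℝ))) 0) (fun _ => -(N:ℝ)) ξ) :
    -- the inequality |x₀| ≤ C|T_μ x|_X fails on the unit ball of X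
    (¬ ∃ C > (0:ℝ), ∀ (z₀ : ℝ) (z₁ : ℝ → ℝ),
        MemLp z₁ 2 (volume.restrict (Set.Icc (-d) 0)) →
        Real.sqrt (z₀^2 + ∫ ξ in Set.Icc (-d) 0, (z₁ ξ)^2) ≤ 1 →
        |z₀| ≤ C * normT z₀ z₁)
    -- |T_μ x^N|_X → 0 while the first component of x^N is 1
    ∧ Filter.Tendsto (fun N : ℕ => normT 1 (xN N)) Filter.atTop (nhds 0) := by
  have hμ0 : 0 < μ := lt_trans one_pos hμ
  have hindf : ∀ N, xN N = ind N := fun N => funext fun ξ => (hxN N ξ).trans rfl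
  -- the per-N bound on normT
  have hbound : ∀ N : ℕ, 0 < N → 1/(N:ℝ) < d →
      normT 1 (xN N) ≤ Real.sqrt ((1/(N:ℝ))^2 + 1/N) := by
    intro N hN hNd
    have hNpos : (0:ℝ) < N := by exact_mod_cast hN
    rw [hnormT]
    apply Real.sqrt_le_sqrt
    have hTf : |Tfst 1 (xN N)| ≤ 1/N := by
      rw [hTfst, hindf]
      have hI : ∫ r in Set.Icc (-d) 0, Real.exp (μ*r) * ind N r
          = -(N:ℝ)*(1 - Real.exp (-(μ/N)))/μ := by
        rw [MeasureTheory.integral_Icc_eq_integral_Ioc,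
          ind_int_pos μ N hμ0 _ _ (by linarith) (by rw [neg_nonpos]; positivity) le_rfl]
        rw [mul_zero, Real.exp_zero]
      rw [hI]
      exact Tfst_bound μ hμ0 N hN
    have hTs : ∫ ξ in Set.Icc (-d) 0, (Tsnd (xN N) ξ)^2 ≤ 1/N := by
      have hcongr : ∫ ξ in Set.Icc (-d) 0, (Tsnd (xN N) ξ)^2
          = ∫ ξ in Set.Icc (-d) 0, (g μ N ξ)^2 := by
        apply MeasureTheory.setIntegral_congr_fun measurableSet_Icc
        intro ξ hξ
        show Tsnd (xN N) ξ ^ 2 = g μ N ξ ^ 2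
        rw [hTsnd, hindf, Tsnd_val d μ hμ0 N hN hNd ξ hξ.1 hξ.2]
      rw [hcongr]
      exact g_int_bound d μ hμ0 N hN hNd
    have hTf2 : (Tfst 1 (xN N))^2 ≤ (1/(N:ℝ))^2 := by
      calc (Tfst 1 (xN N))^2 = |Tfst 1 (xN N)|^2 := (sq_abs _).symm
        _ ≤ (1/(N:ℝ))^2 := by
            apply pow_le_pow_left₀ (abs_nonneg _) hTf
    linarith
  -- the tendsto statement
  have hev : ∀ᶠ N : ℕ in Filter.atTop, 0 < N ∧ 1/(N:ℝ) < d :=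
    (Filter.eventually_gt_atTop 0).and
      (tendsto_one_div_atTop_nhds_zero_nat.eventually_lt_const hd)
  have htend : Filter.Tendsto (fun N : ℕ => normT 1 (xN N)) Filter.atTop (nhds 0) := by
    have hup : Filter.Tendsto (fun N : ℕ => Real.sqrt ((1/(N:ℝ))^2 + 1/N))
        Filter.atTop (nhds 0) := by
      have h0 : Filter.Tendsto (fun N : ℕ => (1/(N:ℝ))^2 + 1/N) Filter.atTop (nhds 0) := by
        have h1 : Filter.Tendsto (fun n : ℕ => 1/(n:ℝ)) Filter.atTop (nhds 0) :=
          tendsto_one_div_atTop_nhds_zero_nat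
        have h2 := (h1.pow 2).add h1
        simpa using h2
      have := (Real.continuous_sqrt.tendsto 0).comp h0
      simpa [Function.comp_def] using this
    apply tendsto_of_tendsto_of_tendsto_of_le_of_le' tendsto_const_nhds hup
    · exact Filter.Eventually.of_forall fun N => by rw [hnormT]; exact Real.sqrt_nonneg _
    · filter_upwards [hev] with N hN
      exact hbound N hN.1 hN.2
  refine ⟨?_, htend⟩
  -- the no-uniform-bound statement
  rintro ⟨C, hC, hb⟩
  have hev1 : ∀ᶠ N : ℕ in Filter.atTop, C * normT 1 (xN N) < 1 := by
    have h := htend.const_mul C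
    rw [mul_zero] at h
    exact h.eventually_lt_const one_pos
  obtain ⟨N, hNsmall, hN, hNd⟩ := (hev1.and hev).exists
  have hNpos : (0:ℝ) < N := by exact_mod_cast hN
  set c : ℝ := (Real.sqrt ((N:ℝ)+1))⁻¹ with hcdef
  have hs : 0 < Real.sqrt ((N:ℝ)+1) := Real.sqrt_pos.mpr (by positivity)
  have hc : 0 < c := inv_pos.mpr hs
  have hc2 : c^2 = ((N:ℝ)+1)⁻¹ := by
    rw [hcdef, inv_pow, Real.sq_sqrt (by positivity)]
  -- membership in L²
  haveI hfin : IsFiniteMeasure (volume.restrict (Set.Icc (-d) 0)) := by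
    constructor
    rw [Measure.restrict_apply_univ, Real.volume_Icc]
    exact ENNReal.ofReal_lt_top
  have hmem : MemLp (fun ξ => c * ind N ξ) 2 (volume.restrict (Set.Icc (-d) 0)) := by
    have h1 : MemLp (ind N) 2 (volume.restrict (Set.Icc (-d) 0)) :=
      MemLp.indicator measurableSet_Icc (memLp_const _)
    exact h1.const_mul c
  -- unit ball condition
  have hsq : ∀ ξ, (c * ind N ξ)^2
      = Set.indicator (Set.Icc (-(1/(N:ℝ))) 0) (fun _ => c^2*(N:ℝ)^2) ξ := by
    intro ξ
    by_cases h : ξ ∈ Set.Icc (-(1/(N:ℝ))) 0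
    · rw [ind, Set.indicator_of_mem h, Set.indicator_of_mem h]; ring
    · rw [ind, Set.indicator_of_notMem h, Set.indicator_of_notMem h, mul_zero]
      norm_num
  have hI2 : ∫ ξ in Set.Icc (-d) 0, (c * ind N ξ)^2 = c^2*(N:ℝ) := by
    simp only [hsq]
    rw [MeasureTheory.setIntegral_indicator measurableSet_Icc, Icc_inter d N hNd,
      MeasureTheory.setIntegral_const, smul_eq_mul, measureReal_def, Real.volume_Icc]
    rw [ENNReal.toReal_ofReal (by rw [zero_sub, neg_neg]; positivity)]
    have hNne : (N:ℝ) ≠ 0 := ne_of_gt hNpos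
    field_simp
    ring
  have hnorm1 : Real.sqrt (c^2 + ∫ ξ in Set.Icc (-d) 0, (c * ind N ξ)^2) ≤ 1 := by
    rw [hI2, hc2]
    have h1 : ((N:ℝ)+1)⁻¹ + ((N:ℝ)+1)⁻¹ * N = 1 := by
      field_simp
      ring
    rw [h1, Real.sqrt_one]
  -- scaling of normT
  have hTfs : Tfst c (fun ξ => c * ind N ξ) = c * Tfst 1 (ind N) := by
    rw [hTfst, hTfst]
    have h1 : ∫ r in Set.Icc (-d) 0, Real.exp (μ*r) * (c * ind N r)
        = c * ∫ r in Set.Icc (-d) 0, Real.exp (μ*r) * ind N r := by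
      rw [← MeasureTheory.integral_const_mul]
      congr 1
      funext r
      ring
    rw [h1]
    ring
  have hTss : ∀ ξ, Tsnd (fun ξ => c * ind N ξ) ξ = c * Tsnd (ind N) ξ := by
    intro ξ
    rw [hTsnd, hTsnd]
    have h1 : (∫ r in (-d)..ξ, Real.exp (-μ*(ξ-r)) * (c * ind N r))
        = c * ∫ r in (-d)..ξ, Real.exp (-μ*(ξ-r)) * ind N r := by
      rw [← intervalIntegral.integral_const_mul]
      congr 1
      funext r
      ring
    rw [h1]
    ring
  have hscale : normT c (fun ξ => c * ind N ξ) = c * normT 1 (ind N) := by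
    rw [hnormT, hnormT, hTfs]
    have h2 : ∫ ξ in Set.Icc (-d) 0, (Tsnd (fun ξ => c * ind N ξ) ξ)^2
        = c^2 * ∫ ξ in Set.Icc (-d) 0, (Tsnd (ind N) ξ)^2 := by
      simp only [hTss, mul_pow]
      exact MeasureTheory.integral_const_mul _ _
    rw [h2, mul_pow, ← mul_add, Real.sqrt_mul (sq_nonneg c), Real.sqrt_sq hc.le]
  -- derive the contradiction
  have hineq := hb c (fun ξ => c * ind N ξ) hmem hnorm1
  rw [hscale, abs_of_pos hc] at hineq
  rw [hindf] at hNsmall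
  nlinarith [hineq, hNsmall, hc]
end
end
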